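/- arXiv:1307.7069 — 2 statements merged into one kernel-verified Lean document; each statement's English description precedes it below -/
import Mathlib

section
/- Let 0 < θ ≤ 1, P₁ ≥ 1 and y ∈ ℤ^{n₂}, and assume P₁^{−d₁ + 3Rθ(d₁−1)} |y|^{(3R−1)d₂} < 1. Then the major arcs 𝔐'^y_{a,q}(θ), taken over all 1 ≤ q ≤ P₁^{Rθ(d₁−1)}|y|^{Rd₂} and all tuples (a₁,…,a_R) with 0 ≤ a_i < q and gcd(q, a₁, …, a_R) = 1, are pairwise disjoint. -/
open scoped BigOperators Pointwise
open MeasureTheory Filter Asymptotics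

noncomputable section

namespace BiprojCM

/-- `e(t) = exp(2πit)`. -/
def eAdd (t : ℝ) : ℂ := Complex.exp (2 * Real.pi * Complex.I * t)

/-- Sup-norm `max_i |x_i|` of an integer vector, as a real number. -/
def mnorm {n : ℕ} (x : Fin n → ℤ) : ℝ := ‖fun i => (x i : ℝ)‖

open Classical in
/-- Dimension of a subset of the affine space `σ → ℂ`: the Krull dimension of its
coordinate ring (the empty set having dimension `-1`). -/
def affDim {σ : Type} (S : Set (σ → ℂ)) : ℤ :=
  if S = ∅ then -1
  else (ENat.toNat ((ringKrullDim (MvPolynomial σ ℂ ⧸ MvPolynomial.vanishingIdeal ℂ S)).unbotD 0) : ℤ)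

variable {n₁ n₂ R : ℕ}

/-- Evaluation of an integral polynomial in the variables `(x; y)` at integer points. -/
def evalZ (F : MvPolynomial (Fin n₁ ⊕ Fin n₂) ℤ) (x : Fin n₁ → ℤ) (y : Fin n₂ → ℤ) : ℤ :=
  MvPolynomial.eval (Sum.elim x y) F

/-- Evaluation at real points. -/
def evalR (F : MvPolynomial (Fin n₁ ⊕ Fin n₂) ℤ) (v : Fin n₁ → ℝ) (w : Fin n₂ → ℝ) : ℝ :=
  MvPolynomial.eval₂ (Int.castRingHom ℝ) (Sum.elim v w) F

/-- Evaluation at complex points. -/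
def evalC (F : MvPolynomial (Fin n₁ ⊕ Fin n₂) ℤ) (x : Fin n₁ → ℂ) (y : Fin n₂ → ℂ) : ℂ :=
  MvPolynomial.eval₂ (Int.castRingHom ℂ) (Sum.elim x y) F

/-- `F` is bihomogeneous of bidegree `(d₁, d₂)`. -/
def Bihomog (d₁ d₂ : ℕ) (F : MvPolynomial (Fin n₁ ⊕ Fin n₂) ℤ) : Prop :=
  ∀ (a b : ℂ) (x : Fin n₁ → ℂ) (y : Fin n₂ → ℂ),
    evalC F (fun i => a * x i) (fun j => b * y j) = a ^ d₁ * b ^ d₂ * evalC F x y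

/-- The Jacobian matrix `(∂F_i/∂x_j)_{i,j}` evaluated at a complex point. -/
def jacX (F : Fin R → MvPolynomial (Fin n₁ ⊕ Fin n₂) ℤ) (x : Fin n₁ → ℂ) (y : Fin n₂ → ℂ) :
    Matrix (Fin R) (Fin n₁) ℂ :=
  Matrix.of fun i j => evalC (MvPolynomial.pderiv (Sum.inl j) (F i)) x y

/-- The Jacobian matrix `(∂F_i/∂y_j)_{i,j}` evaluated at a complex point. -/
def jacY (F : Fin R → MvPolynomial (Fin n₁ ⊕ Fin n₂) ℤ) (x : Fin n₁ → ℂ) (y : Fin n₂ → ℂ) :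
    Matrix (Fin R) (Fin n₂) ℂ :=
  Matrix.of fun i j => evalC (MvPolynomial.pderiv (Sum.inr j) (F i)) x y

/-- The affine variety `V₁* ⊆ 𝔸_ℂ^{n₁+n₂}` given by `rank (∂F_i/∂x_j) < R`. -/
def V1star (F : Fin R → MvPolynomial (Fin n₁ ⊕ Fin n₂) ℤ) : Set (Fin n₁ ⊕ Fin n₂ → ℂ) :=
  {p | (jacX F (fun i => p (Sum.inl i)) (fun j => p (Sum.inr j))).rank < R}

/-- The affine variety `V₂* ⊆ 𝔸_ℂ^{n₁+n₂}` given by `rank (∂F_i/∂y_j) < R`. -/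
def V2star (F : Fin R → MvPolynomial (Fin n₁ ⊕ Fin n₂) ℤ) : Set (Fin n₁ ⊕ Fin n₂ → ℂ) :=
  {p | (jacY F (fun i => p (Sum.inl i)) (fun j => p (Sum.inr j))).rank < R}

/-- For fixed `y`, the variety `V₁,y* ⊆ 𝔸_ℂ^{n₁}`. -/
def V1y (F : Fin R → MvPolynomial (Fin n₁ ⊕ Fin n₂) ℤ) (y : Fin n₂ → ℂ) :
    Set (Fin n₁ → ℂ) :=
  {x | (jacX F x y).rank < R}

/-- For fixed `x`, the variety `V₂,x* ⊆ 𝔸_ℂ^{n₂}`. -/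
def V2x (F : Fin R → MvPolynomial (Fin n₁ ⊕ Fin n₂) ℤ) (x : Fin n₁ → ℂ) :
    Set (Fin n₂ → ℂ) :=
  {y | (jacY F x y).rank < R}

/-- `𝒜₁(ℤ) = {y ∈ ℤ^{n₂} : dim V₁,y* < dim V₁* − n₂ + λ}`. -/
def A1Z (F : Fin R → MvPolynomial (Fin n₁ ⊕ Fin n₂) ℤ) (lam : ℕ) : Set (Fin n₂ → ℤ) :=
  {y | affDim (V1y F fun j => (y j : ℂ)) < affDim (V1star F) - n₂ + lam}

/-- `𝒜₂(ℤ) = {x ∈ ℤ^{n₁} : dim V₂,x* < dim V₂* − n₁ + λ₂}`. -/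
def A2Z (F : Fin R → MvPolynomial (Fin n₁ ⊕ Fin n₂) ℤ) (lam : ℕ) : Set (Fin n₁ → ℤ) :=
  {x | affDim (V2x F fun i => (x i : ℂ)) < affDim (V2star F) - n₁ + lam}

/-- A box in `ℝ^n`: a product of bounded intervals. -/
def IsBox {n : ℕ} (B : Set (Fin n → ℝ)) : Prop :=
  ∃ a b : Fin n → ℝ, B = {v | ∀ i, v i ∈ Set.Icc (a i) (b i)}

/-- Integer points of the dilated box `P • B`. -/
def intBox {n : ℕ} (B : Set (Fin n → ℝ)) (P : ℝ) : Set (Fin n → ℤ) :=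
  {x | (fun i => (x i : ℝ)) ∈ P • B}

/-- `N_y(P₁)`: the number of integer points `x ∈ P₁ℬ₁` with `F_i(x; y) = 0` for all `i`. -/
def Ny (F : Fin R → MvPolynomial (Fin n₁ ⊕ Fin n₂) ℤ) (B₁ : Set (Fin n₁ → ℝ))
    (y : Fin n₂ → ℤ) (P₁ : ℝ) : ℕ :=
  Set.ncard {x : Fin n₁ → ℤ | x ∈ intBox B₁ P₁ ∧ ∀ i, evalZ (F i) x y = 0}

/-- `N₁(P₁, P₂) = Σ_{y ∈ P₂ℬ₂ ∩ 𝒜₁(ℤ)} N_y(P₁)` as a count of pairs. -/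
def N1 (F : Fin R → MvPolynomial (Fin n₁ ⊕ Fin n₂) ℤ) (B₁ : Set (Fin n₁ → ℝ))
    (B₂ : Set (Fin n₂ → ℝ)) (lam : ℕ) (P₁ P₂ : ℝ) : ℕ :=
  Set.ncard {p : (Fin n₁ → ℤ) × (Fin n₂ → ℤ) |
    p.1 ∈ intBox B₁ P₁ ∧ p.2 ∈ intBox B₂ P₂ ∧ p.2 ∈ A1Z F lam ∧
    ∀ i, evalZ (F i) p.1 p.2 = 0}

/-- `N₂(P₁, P₂)`, with the roles of `x` and `y` interchanged. -/
def N2 (F : Fin R → MvPolynomial (Fin n₁ ⊕ Fin n₂) ℤ) (B₁ : Set (Fin n₁ → ℝ))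
    (B₂ : Set (Fin n₂ → ℝ)) (lam₂ : ℕ) (P₁ P₂ : ℝ) : ℕ :=
  Set.ncard {p : (Fin n₁ → ℤ) × (Fin n₂ → ℤ) |
    p.1 ∈ intBox B₁ P₁ ∧ p.2 ∈ intBox B₂ P₂ ∧ p.1 ∈ A2Z F lam₂ ∧
    ∀ i, evalZ (F i) p.1 p.2 = 0}

/-- `N_U(P₁, P₂)`: integer points of `U = U₁ × U₂` in the dilated boxes solving the system. -/
def NU (F : Fin R → MvPolynomial (Fin n₁ ⊕ Fin n₂) ℤ) (B₁ : Set (Fin n₁ → ℝ))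
    (B₂ : Set (Fin n₂ → ℝ)) (lam₁ lam₂ : ℕ) (P₁ P₂ : ℝ) : ℕ :=
  Set.ncard {p : (Fin n₁ → ℤ) × (Fin n₂ → ℤ) |
    p.1 ∈ intBox B₁ P₁ ∧ p.2 ∈ intBox B₂ P₂ ∧
    p.1 ∈ A2Z F lam₂ ∧ p.2 ∈ A1Z F lam₁ ∧
    ∀ i, evalZ (F i) p.1 p.2 = 0}

/-- The exponential sum `S_y(α) = Σ_{x ∈ P₁ℬ₁ ∩ ℤ^{n₁}} e(Σ_i α_i F_i(x; y))`. -/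
def Sexp (F : Fin R → MvPolynomial (Fin n₁ ⊕ Fin n₂) ℤ) (B₁ : Set (Fin n₁ → ℝ))
    (P₁ : ℝ) (y : Fin n₂ → ℤ) (α : Fin R → ℝ) : ℂ :=
  ∑' x : ↥(intBox B₁ P₁), eAdd (∑ i, α i * (evalZ (F i) (x : Fin n₁ → ℤ) y : ℝ))

/-- The complete exponential sum `S_{a,q}(y) = Σ_{z mod q} e(Σ_i (a_i/q) F_i(z; y))`. -/
def Saq (F : Fin R → MvPolynomial (Fin n₁ ⊕ Fin n₂) ℤ) (q : ℕ) (a : Fin R → ℤ)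
    (y : Fin n₂ → ℤ) : ℂ :=
  ∑ z : Fin n₁ → Fin q,
    eAdd (∑ i, (a i : ℝ) / q * (evalZ (F i) (fun j => ((z j : ℕ) : ℤ)) y : ℝ))

/-- The `q`-th term of the singular series `𝔖_y`. -/
def SStermY (F : Fin R → MvPolynomial (Fin n₁ ⊕ Fin n₂) ℤ) (y : Fin n₂ → ℤ) (q : ℕ) : ℂ :=
  ((q : ℂ) ^ n₁)⁻¹ * ∑ a : Fin R → Fin q,
    if Nat.gcd q (Finset.univ.gcd fun i => (a i : ℕ)) = 1
    then Saq F q (fun i => ((a i : ℕ) : ℤ)) y else 0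

/-- The singular series `𝔖_y`. -/
def SSy (F : Fin R → MvPolynomial (Fin n₁ ⊕ Fin n₂) ℤ) (y : Fin n₂ → ℤ) : ℂ :=
  ∑' q : ℕ, SStermY F y q

/-- The truncated singular series `𝔖_y(t) = Σ_{q ≤ t} q^{-n₁} Σ_a S_{a,q}(y)`. -/
def SSyT (F : Fin R → MvPolynomial (Fin n₁ ⊕ Fin n₂) ℤ) (y : Fin n₂ → ℤ) (t : ℝ) : ℂ :=
  ∑ q ∈ Finset.Icc 1 ⌊t⌋₊, SStermY F y q

/-- The integral `I_y(β) = ∫_{v ∈ ℬ₁} e(Σ_i β_i F_i(v; y)) dv`. -/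
def Iy (F : Fin R → MvPolynomial (Fin n₁ ⊕ Fin n₂) ℤ) (B₁ : Set (Fin n₁ → ℝ))
    (y : Fin n₂ → ℤ) (β : Fin R → ℝ) : ℂ :=
  ∫ v in B₁, eAdd (∑ i, β i * evalR (F i) v (fun j => (y j : ℝ)))

/-- The singular integral `J_y = ∫_{ℝ^R} I_y(β) dβ`. -/
def Jy (F : Fin R → MvPolynomial (Fin n₁ ⊕ Fin n₂) ℤ) (B₁ : Set (Fin n₁ → ℝ))
    (y : Fin n₂ → ℤ) : ℂ :=
  ∫ β : Fin R → ℝ, Iy F B₁ y β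

/-- The truncated singular integral `J_y(t) = ∫_{|β| ≤ t} I_y(β) dβ`. -/
def JyT (F : Fin R → MvPolynomial (Fin n₁ ⊕ Fin n₂) ℤ) (B₁ : Set (Fin n₁ → ℝ))
    (y : Fin n₂ → ℤ) (t : ℝ) : ℂ :=
  ∫ β in {β : Fin R → ℝ | ∀ i, |β i| ≤ t}, Iy F B₁ y β

/-- The symmetric complete exponential sum `S_{a,q}(x)`. -/
def SaqX (F : Fin R → MvPolynomial (Fin n₁ ⊕ Fin n₂) ℤ) (q : ℕ) (a : Fin R → ℤ)
    (x : Fin n₁ → ℤ) : ℂ :=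
  ∑ z : Fin n₂ → Fin q,
    eAdd (∑ i, (a i : ℝ) / q * (evalZ (F i) x (fun j => ((z j : ℕ) : ℤ)) : ℝ))

/-- The `q`-th term of the singular series `𝔖_x`. -/
def SStermX (F : Fin R → MvPolynomial (Fin n₁ ⊕ Fin n₂) ℤ) (x : Fin n₁ → ℤ) (q : ℕ) : ℂ :=
  ((q : ℂ) ^ n₂)⁻¹ * ∑ a : Fin R → Fin q,
    if Nat.gcd q (Finset.univ.gcd fun i => (a i : ℕ)) = 1
    then SaqX F q (fun i => ((a i : ℕ) : ℤ)) x else 0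

/-- The singular series `𝔖_x`. -/
def SSx (F : Fin R → MvPolynomial (Fin n₁ ⊕ Fin n₂) ℤ) (x : Fin n₁ → ℤ) : ℂ :=
  ∑' q : ℕ, SStermX F x q

/-- The integral `I_x(β) = ∫_{w ∈ ℬ₂} e(Σ_i β_i F_i(x; w)) dw`. -/
def Ix (F : Fin R → MvPolynomial (Fin n₁ ⊕ Fin n₂) ℤ) (B₂ : Set (Fin n₂ → ℝ))
    (x : Fin n₁ → ℤ) (β : Fin R → ℝ) : ℂ :=
  ∫ w in B₂, eAdd (∑ i, β i * evalR (F i) (fun i' => (x i' : ℝ)) w)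

/-- The singular integral `J_x = ∫_{ℝ^R} I_x(β) dβ`. -/
def Jx (F : Fin R → MvPolynomial (Fin n₁ ⊕ Fin n₂) ℤ) (B₂ : Set (Fin n₂ → ℝ))
    (x : Fin n₁ → ℤ) : ℂ :=
  ∫ β : Fin R → ℝ, Ix F B₂ x β

/-- The complete exponential sum of the whole system in all `n₁ + n₂` variables. -/
def SaqAll (F : Fin R → MvPolynomial (Fin n₁ ⊕ Fin n₂) ℤ) (q : ℕ) (a : Fin R → ℤ) : ℂ :=
  ∑ z : (Fin n₁ ⊕ Fin n₂) → Fin q,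
    eAdd (∑ i, (a i : ℝ) / q * (MvPolynomial.eval (fun j => ((z j : ℕ) : ℤ)) (F i) : ℝ))

/-- The `q`-th term of the singular series of the whole system. -/
def SStermAll (F : Fin R → MvPolynomial (Fin n₁ ⊕ Fin n₂) ℤ) (q : ℕ) : ℂ :=
  ((q : ℂ) ^ (n₁ + n₂))⁻¹ * ∑ a : Fin R → Fin q,
    if Nat.gcd q (Finset.univ.gcd fun i => (a i : ℕ)) = 1
    then SaqAll F q (fun i => ((a i : ℕ) : ℤ)) else 0

/-- The singular series `𝔖` of the system. -/
def SSall (F : Fin R → MvPolynomial (Fin n₁ ⊕ Fin n₂) ℤ) : ℂ :=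
  ∑' q : ℕ, SStermAll F q

/-- The singular integral `J` of the system, taken with respect to the box
`[-1,1]^{n₁+n₂}`. -/
def SIall (F : Fin R → MvPolynomial (Fin n₁ ⊕ Fin n₂) ℤ) : ℂ :=
  ∫ β : Fin R → ℝ,
    ∫ v in {v : Fin n₁ ⊕ Fin n₂ → ℝ | ∀ j, v j ∈ Set.Icc (-1 : ℝ) 1},
      eAdd (∑ i, β i * MvPolynomial.eval₂ (Int.castRingHom ℝ) v (F i))

/-- `σ`: the product of the circle-method singular series and singular integral. -/
def sigmaC (F : Fin R → MvPolynomial (Fin n₁ ⊕ Fin n₂) ℤ) : ℂ := SSall F * SIall F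

/-- The quantity `g₁(u, δ)`. -/
def g1 (R d₁ d₂ : ℕ) (u δ : ℝ) : ℝ :=
  (1 - u * d₂ * (2 * (R : ℝ) ^ 2 + 3 * R) - δ)⁻¹ *
    ((2 * (R : ℝ) + 3) * R * ((d₁ : ℝ) - 1)) * (u * d₂ * R * (2 * (R : ℝ) + 1) + 2 * δ)

/-- The quantity `g₂(u, δ)`. -/
def g2 (R d₁ d₂ : ℕ) (u δ : ℝ) : ℝ :=
  (u - (d₁ : ℝ) * (2 * (R : ℝ) ^ 2 + 3 * R) - u * δ)⁻¹ *
    ((2 * (R : ℝ) + 3) * R * ((d₂ : ℝ) - 1)) * ((d₁ : ℝ) * R * (2 * (R : ℝ) + 1) + 2 * u * δ)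

/-- The defining equation for `b₁`. -/
def b1Eq (R d₁ d₂ : ℕ) (δ b₁ : ℝ) : Prop :=
  (2 : ℝ) ^ (d₁ + d₂ - 2) * R * (b₁ * d₁ + d₂) =
    (2 : ℝ) ^ (d₁ - 1) * (g1 R d₁ d₂ (1 / b₁) δ + R * ((R : ℝ) + 1) * ((d₁ : ℝ) - 1)) +
      (⌈(R : ℝ) * (b₁ * d₁ + d₂) + δ⌉ : ℤ)

/-- The defining equation for `b₂`. -/
def b2Eq (R d₁ d₂ : ℕ) (δ b₂ : ℝ) : Prop :=
  (2 : ℝ) ^ (d₁ + d₂ - 2) * R * (b₂ * d₂ + d₁) =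
    (2 : ℝ) ^ (d₂ - 1) * (g2 R d₁ d₂ b₂ δ + R * ((R : ℝ) + 1) * ((d₂ : ℝ) - 1)) +
      (⌈(R : ℝ) * (b₂ * d₂ + d₁) + δ⌉ : ℤ)

/-- The conclusion of the Weyl-type lemma (Lemma 5.3 of the paper), for a constant `C₃`. -/
def WeylProp (F : Fin R → MvPolynomial (Fin n₁ ⊕ Fin n₂) ℤ) (B₁ : Set (Fin n₁ → ℝ))
    (d₁ d₂ : ℕ) (lam : ℕ) (K₁ ε C₃ : ℝ) : Prop :=
  ∀ θ : ℝ, 0 < θ → θ ≤ 1 → ∀ P₁ : ℝ, 1 ≤ P₁ → C₃ < P₁ ^ θ →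
    ∀ y ∈ A1Z F lam, ∀ α : Fin R → ℝ,
      ‖Sexp F B₁ P₁ y α‖ < P₁ ^ ((n₁ : ℝ) - K₁ * θ + ε) ∨
      ∃ q : ℕ, 1 ≤ q ∧
        (q : ℝ) ≤ P₁ ^ ((R : ℝ) * θ * ((d₁ : ℝ) - 1)) * mnorm y ^ (R * d₂) ∧
        ∃ a : Fin R → ℤ,
          Nat.gcd q (Finset.univ.gcd fun i => (a i).natAbs) = 1 ∧
          ∀ i, 2 * |(q : ℝ) * α i - (a i : ℝ)| ≤
            P₁ ^ (-(d₁ : ℝ) + (R : ℝ) * θ * ((d₁ : ℝ) - 1)) * mnorm y ^ ((R - 1) * d₂)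

/-- The (enlarged) major arc `𝔐'^y_{a,q}(θ)`. -/
def majorArc' (d₁ d₂ : ℕ) (P₁ θ : ℝ) (y : Fin n₂ → ℤ) (q : ℕ) (a : Fin R → ℤ) :
    Set (Fin R → ℝ) :=
  {α | (∀ i, α i ∈ Set.Icc (0 : ℝ) 1) ∧
    ∀ i, 2 * |(q : ℝ) * α i - (a i : ℝ)| ≤
      (q : ℝ) * P₁ ^ (-(d₁ : ℝ) + (R : ℝ) * θ * ((d₁ : ℝ) - 1)) * mnorm y ^ ((R - 1) * d₂)}


/-- Condition (I) for an arithmetical function `h`. -/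
def CondI (h : ℕ → ℕ → ℝ) (C δ β₁ β₂ : ℝ) : Prop :=
  ∃ K > (0 : ℝ), ∀ L M : ℝ, 1 ≤ L → 1 ≤ M →
    |(∑ l ∈ Finset.Icc 1 ⌊L⌋₊, ∑ m ∈ Finset.Icc 1 ⌊M⌋₊, h l m) - C * L ^ β₁ * M ^ β₂| ≤
      K * L ^ β₁ * M ^ β₂ * (min L M) ^ (-δ)

/-- Condition (II) for an arithmetical function `h`, with given `c₁`, `c₂`. -/
def CondII (h : ℕ → ℕ → ℝ) (δ β₁ β₂ ν D : ℝ) (c₁ c₂ : ℕ → ℝ) : Prop :=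
  (∃ K > (0 : ℝ), ∀ (L : ℝ) (m : ℕ), 1 ≤ L → 1 ≤ m → (m : ℝ) ≤ L ^ ν →
    |(∑ l ∈ Finset.Icc 1 ⌊L⌋₊, h l m) - c₁ m * L ^ β₁| ≤ K * (m : ℝ) ^ D * L ^ (β₁ - δ)) ∧
  (∃ K > (0 : ℝ), ∀ (M : ℝ) (l : ℕ), 1 ≤ M → 1 ≤ l → (l : ℝ) ≤ M ^ ν →
    |(∑ m ∈ Finset.Icc 1 ⌊M⌋₊, h l m) - c₂ l * M ^ β₂| ≤ K * (l : ℝ) ^ D * M ^ (β₂ - δ))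

open Classical in
/-- `Υ_h(P) = Σ_{l^{β₁} m^{β₂} ≤ P} h(l, m)`, the sum over pairs of positive integers. -/
def Upsilon (h : ℕ → ℕ → ℝ) (β₁ β₂ : ℝ) (P : ℝ) : ℝ :=
  ∑' p : ℕ × ℕ,
    if 1 ≤ p.1 ∧ 1 ≤ p.2 ∧ (p.1 : ℝ) ^ β₁ * (p.2 : ℝ) ^ β₂ ≤ P then h p.1 p.2 else 0

open Classical in
/-- `T₁ = Σ_{l ≤ P^μ} Σ_{P^{1/2} < m^{β₂} ≤ P l^{−β₁}} h(l, m)`. -/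
def T1 (h : ℕ → ℕ → ℝ) (β₁ β₂ μ : ℝ) (P : ℝ) : ℝ :=
  ∑ l ∈ Finset.Icc 1 ⌊P ^ μ⌋₊, ∑' m : ℕ,
    if P ^ ((1 : ℝ) / 2) < (m : ℝ) ^ β₂ ∧ (m : ℝ) ^ β₂ ≤ P * (l : ℝ) ^ (-β₁)
    then h l m else 0

open Classical in
/-- `T₂ = Σ_{P^μ < l ≤ P^{1/(2β₁)}} Σ_{P^{1/2} < m^{β₂} ≤ P l^{−β₁}} h(l, m)`. -/
def T2 (h : ℕ → ℕ → ℝ) (β₁ β₂ μ : ℝ) (P : ℝ) : ℝ :=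
  ∑ l ∈ Finset.Ioc ⌊P ^ μ⌋₊ ⌊P ^ (1 / (2 * β₁))⌋₊, ∑' m : ℕ,
    if P ^ ((1 : ℝ) / 2) < (m : ℝ) ^ β₂ ∧ (m : ℝ) ^ β₂ ≤ P * (l : ℝ) ^ (-β₁)
    then h l m else 0

variable {n₁ n₂ : ℕ}

/-- A primitive integer vector. -/
def primitive {n : ℕ} (x : Fin n → ℤ) : Prop :=
  Finset.univ.gcd (fun i => (x i).natAbs) = 1

/- ℂ-coefficient versions -/
/-- Evaluation of a complex polynomial in the variables `(x; y)`. -/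
def evalCC (F : MvPolynomial (Fin n₁ ⊕ Fin n₂) ℂ) (x : Fin n₁ → ℂ) (y : Fin n₂ → ℂ) : ℂ :=
  MvPolynomial.eval (Sum.elim x y) F

/-- `F ∈ ℂ[x; y]` is bihomogeneous of bidegree `(d₁, d₂)`. -/
def BihomogC (d₁ d₂ : ℕ) (F : MvPolynomial (Fin n₁ ⊕ Fin n₂) ℂ) : Prop :=
  ∀ (a b : ℂ) (x : Fin n₁ → ℂ) (y : Fin n₂ → ℂ),
    evalCC F (fun i => a * x i) (fun j => b * y j) = a ^ d₁ * b ^ d₂ * evalCC F x y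

/-- The locus `V₁* ⊆ 𝔸_ℂ^{n₁+n₂}` where all `∂F/∂x_j` vanish (case `R = 1`). -/
def V1starC (F : MvPolynomial (Fin n₁ ⊕ Fin n₂) ℂ) : Set (Fin n₁ ⊕ Fin n₂ → ℂ) :=
  {p | ∀ j : Fin n₁, MvPolynomial.eval p (MvPolynomial.pderiv (Sum.inl j) F) = 0}

/-- The locus `V₂* ⊆ 𝔸_ℂ^{n₁+n₂}` where all `∂F/∂y_j` vanish (case `R = 1`). -/
def V2starC (F : MvPolynomial (Fin n₁ ⊕ Fin n₂) ℂ) : Set (Fin n₁ ⊕ Fin n₂ → ℂ) :=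
  {p | ∀ j : Fin n₂, MvPolynomial.eval p (MvPolynomial.pderiv (Sum.inr j) F) = 0}

/-- Smoothness of the biprojective hypersurface `F = 0`: there is no point with
`x ≠ 0` and `y ≠ 0` on the hypersurface where the full complex gradient vanishes. -/
def SmoothXC (F : MvPolynomial (Fin n₁ ⊕ Fin n₂) ℂ) : Prop :=
  ¬ ∃ p : Fin n₁ ⊕ Fin n₂ → ℂ,
      (fun i => p (Sum.inl i)) ≠ 0 ∧ (fun j => p (Sum.inr j)) ≠ 0 ∧
      MvPolynomial.eval p F = 0 ∧
      ∀ j : Fin n₁ ⊕ Fin n₂, MvPolynomial.eval p (MvPolynomial.pderiv j F) = 0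



/-- **Lemma 7.1 (lem3.1).** Under the condition
`P₁^{−d₁+3Rθ(d₁−1)} |y|^{(3R−1)d₂} < 1`, the major arcs `𝔐'^y_{a,q}(θ)` are pairwise
disjoint. -/
theorem major_arcs_disjoint
    (n₁ n₂ R d₁ d₂ : ℕ) (hn₁ : 0 < n₁) (hn₂ : 0 < n₂) (hR : 0 < R)
    (F : Fin R → MvPolynomial (Fin n₁ ⊕ Fin n₂) ℤ)
    (hF : ∀ i, Bihomog d₁ d₂ (F i))
    (θ P₁ : ℝ) (hθ0 : 0 < θ) (hθ1 : θ ≤ 1) (hP₁ : 1 ≤ P₁)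
    (y : Fin n₂ → ℤ)
    (hMA : P₁ ^ (-(d₁ : ℝ) + 3 * R * θ * ((d₁ : ℝ) - 1)) * mnorm y ^ ((3 * R - 1) * d₂) < 1) :
    ∀ (q q' : ℕ) (a a' : Fin R → ℤ),
      1 ≤ q → (q : ℝ) ≤ P₁ ^ ((R : ℝ) * θ * ((d₁ : ℝ) - 1)) * mnorm y ^ (R * d₂) →
      (∀ i, 0 ≤ a i ∧ a i < (q : ℤ)) →
      Nat.gcd q (Finset.univ.gcd fun i => (a i).natAbs) = 1 →
      1 ≤ q' → (q' : ℝ) ≤ P₁ ^ ((R : ℝ) * θ * ((d₁ : ℝ) - 1)) * mnorm y ^ (R * d₂) →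
      (∀ i, 0 ≤ a' i ∧ a' i < (q' : ℤ)) →
      Nat.gcd q' (Finset.univ.gcd fun i => (a' i).natAbs) = 1 →
      (q, a) ≠ (q', a') →
      majorArc' d₁ d₂ P₁ θ y q a ∩ majorArc' d₁ d₂ P₁ θ y q' a' = ∅ := by
  intro q q' a a' hq1 hqle ha ha_gcd hq'1 hq'le ha' ha'_gcd hne
  rw [Set.eq_empty_iff_forall_notMem]
  rintro α ⟨⟨-, h1⟩, ⟨-, h2⟩⟩
  have hP₁0 : (0 : ℝ) < P₁ := lt_of_lt_of_le one_pos hP₁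
  have hm0 : (0 : ℝ) ≤ mnorm y := norm_nonneg _
  set c : ℝ := -(d₁ : ℝ) + (R : ℝ) * θ * ((d₁ : ℝ) - 1) with hc
  set Δ : ℝ := P₁ ^ c * mnorm y ^ ((R - 1) * d₂) with hΔ
  have hΔ0 : 0 ≤ Δ := mul_nonneg (Real.rpow_nonneg hP₁0.le _) (pow_nonneg hm0 _)
  have hq0 : (0 : ℝ) ≤ (q : ℝ) := Nat.cast_nonneg q
  have hq'0 : (0 : ℝ) ≤ (q' : ℝ) := Nat.cast_nonneg q'
  have hqq' : (q : ℝ) * q' * Δ < 1 := by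
    have hbig : (q : ℝ) * q' * Δ ≤
        (P₁ ^ ((R : ℝ) * θ * ((d₁ : ℝ) - 1)) * mnorm y ^ (R * d₂)) *
        (P₁ ^ ((R : ℝ) * θ * ((d₁ : ℝ) - 1)) * mnorm y ^ (R * d₂)) * Δ := by
      have h := mul_le_mul hqle hq'le hq'0 (le_trans hq0 hqle)
      exact mul_le_mul_of_nonneg_right h hΔ0
    refine lt_of_le_of_lt (hbig.trans_eq ?_) hMA
    have hnat : (3 * R - 1) * d₂ = R * d₂ + (R * d₂ + (R - 1) * d₂) := by
      have h3 : 3 * R - 1 = R + (R + (R - 1)) := by omega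
      rw [h3, Nat.add_mul, Nat.add_mul]
    have hP : P₁ ^ ((R : ℝ) * θ * ((d₁ : ℝ) - 1)) * P₁ ^ ((R : ℝ) * θ * ((d₁ : ℝ) - 1)) *
        P₁ ^ c = P₁ ^ (-(d₁ : ℝ) + 3 * R * θ * ((d₁ : ℝ) - 1)) := by
      rw [← Real.rpow_add hP₁0, ← Real.rpow_add hP₁0]
      congr 1
      rw [hc]; ring
    have hm : mnorm y ^ (R * d₂) * mnorm y ^ (R * d₂) * mnorm y ^ ((R - 1) * d₂) =
        mnorm y ^ ((3 * R - 1) * d₂) := by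
      rw [← pow_add, ← pow_add, hnat, add_assoc]
    calc P₁ ^ ((R : ℝ) * θ * ((d₁ : ℝ) - 1)) * mnorm y ^ (R * d₂) *
          (P₁ ^ ((R : ℝ) * θ * ((d₁ : ℝ) - 1)) * mnorm y ^ (R * d₂)) * Δ
        = (P₁ ^ ((R : ℝ) * θ * ((d₁ : ℝ) - 1)) * P₁ ^ ((R : ℝ) * θ * ((d₁ : ℝ) - 1)) *
              P₁ ^ c) *
            (mnorm y ^ (R * d₂) * mnorm y ^ (R * d₂) * mnorm y ^ ((R - 1) * d₂)) := by
          rw [hΔ]; ring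
      _ = P₁ ^ (-(d₁ : ℝ) + 3 * R * θ * ((d₁ : ℝ) - 1)) * mnorm y ^ ((3 * R - 1) * d₂) := by
          rw [hP, hm]
  have key : ∀ i, (q' : ℤ) * a i = (q : ℤ) * a' i := by
    intro i
    have b1 : |(q : ℝ) * α i - a i| ≤ (q : ℝ) * Δ / 2 := by
      have h := h1 i
      have e : (q : ℝ) * P₁ ^ c * mnorm y ^ ((R - 1) * d₂) = (q : ℝ) * Δ := by
        rw [hΔ]; ring
      rw [e] at h; linarith
    have b2 : |(q' : ℝ) * α i - a' i| ≤ (q' : ℝ) * Δ / 2 := by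
      have h := h2 i
      have e : (q' : ℝ) * P₁ ^ c * mnorm y ^ ((R - 1) * d₂) = (q' : ℝ) * Δ := by
        rw [hΔ]; ring
      rw [e] at h; linarith
    have ht : |(q' : ℝ) * (a i : ℝ) - (q : ℝ) * (a' i : ℝ)| < 1 := by
      have e : (q' : ℝ) * (a i : ℝ) - (q : ℝ) * (a' i : ℝ) =
          -((q' : ℝ) * ((q : ℝ) * α i - a i) - (q : ℝ) * ((q' : ℝ) * α i - a' i)) := by
        ring
      rw [e, abs_neg]
      calc |(q' : ℝ) * ((q : ℝ) * α i - a i) - (q : ℝ) * ((q' : ℝ) * α i - a' i)|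
          ≤ |(q' : ℝ) * ((q : ℝ) * α i - a i)| + |(q : ℝ) * ((q' : ℝ) * α i - a' i)| :=
            abs_sub _ _
        _ = (q' : ℝ) * |(q : ℝ) * α i - a i| + (q : ℝ) * |(q' : ℝ) * α i - a' i| := by
            rw [abs_mul, abs_mul, abs_of_nonneg hq0, abs_of_nonneg hq'0]
        _ ≤ (q' : ℝ) * ((q : ℝ) * Δ / 2) + (q : ℝ) * ((q' : ℝ) * Δ / 2) := by gcongr
        _ = (q : ℝ) * q' * Δ := by ring
        _ < 1 := hqq'
    have hz : (q' : ℤ) * a i - (q : ℤ) * a' i = 0 := by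
      rw [show (q' : ℝ) * (a i : ℝ) - (q : ℝ) * (a' i : ℝ) =
          (((q' : ℤ) * a i - (q : ℤ) * a' i : ℤ) : ℝ) by push_cast; ring] at ht
      have h2' : |(q' : ℤ) * a i - (q : ℤ) * a' i| < 1 := by exact_mod_cast ht
      have h3' := abs_lt.mp h2'
      omega
    linarith [hz]
  have keyN : ∀ i, q' * (a i).natAbs = q * (a' i).natAbs := by
    intro i
    have h := congrArg Int.natAbs (key i)
    simpa [Int.natAbs_mul] using h
  have hdvd1 : q ∣ q' := by
    have hd : q ∣ Finset.univ.gcd (fun i : Fin R => q' * (a i).natAbs) :=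
      Finset.dvd_gcd fun i _ => ⟨(a' i).natAbs, keyN i⟩
    have hgl : Finset.univ.gcd (fun i : Fin R => q' * (a i).natAbs) =
        q' * Finset.univ.gcd (fun i => (a i).natAbs) := by
      simpa using Finset.gcd_mul_left (s := (Finset.univ : Finset (Fin R)))
        (f := fun i => (a i).natAbs) (a := q')
    rw [hgl] at hd
    exact (Nat.Coprime.dvd_of_dvd_mul_right ha_gcd hd)
  have hdvd2 : q' ∣ q := by
    have hd : q' ∣ Finset.univ.gcd (fun i : Fin R => q * (a' i).natAbs) :=
      Finset.dvd_gcd fun i _ => ⟨(a i).natAbs, (keyN i).symm⟩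
    have hgl : Finset.univ.gcd (fun i : Fin R => q * (a' i).natAbs) =
        q * Finset.univ.gcd (fun i => (a' i).natAbs) := by
      simpa using Finset.gcd_mul_left (s := (Finset.univ : Finset (Fin R)))
        (f := fun i => (a' i).natAbs) (a := q)
    rw [hgl] at hd
    exact (Nat.Coprime.dvd_of_dvd_mul_right ha'_gcd hd)
  have hqeq : q = q' := Nat.dvd_antisymm hdvd1 hdvd2
  have haeq : a = a' := by
    funext i
    have h := key i
    rw [← hqeq] at h
    have hq0' : (q : ℤ) ≠ 0 := by exact_mod_cast (by omega : q ≠ 0)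
    exact mul_left_cancel₀ hq0' h
  exact hne (by rw [hqeq, haeq])

end BiprojCM
end
end

section
/- Let h satisfy conditions (I) and (II). Fix μ with 0 < β₁μ < 1/2 satisfying μ(1 + νβ₁/β₂) ≤ ν/β₂ and μ(D − β₁ + 1 + δβ₁/β₂) < δ/(2β₂). Define T₁ = Σ_{l ≤ P^μ} Σ_{P^{1/2} < m^{β₂} ≤ P l^{−β₁}} h(l,m). Then there exist a real number B' and ϑ > 0 such that T₁ = β₁ C μ P log P + B' P + O(P^{1−ϑ}). -/
open scoped BigOperators Pointwise
open MeasureTheory Filter Asymptotics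

noncomputable section

namespace BiprojCM

variable {n₁ n₂ R : ℕ}

variable {n₁ n₂ : ℕ}

section T1helpers
open Finset Real

private lemma exp_neg_le_inv (t : ℝ) (ht : 0 ≤ t) : Real.exp (-t) ≤ 1 / (1 + t) := by
  rw [Real.exp_neg, one_div]
  exact inv_anti₀ (by linarith) (by linarith [Real.add_one_le_exp t])
private lemma one_sub_exp_le (t : ℝ) : 1 - Real.exp (-t) ≤ t := by
  linarith [Real.add_one_le_exp (-t)]
private lemma one_sub_exp_ge (t : ℝ) (ht : 0 ≤ t) : t / (1 + t) ≤ 1 - Real.exp (-t) := by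
  have h := exp_neg_le_inv t ht
  have h1 : (0:ℝ) < 1 + t := by linarith
  have e : t / (1 + t) = 1 - 1 / (1 + t) := by field_simp; ring
  rw [e]; linarith
private lemma one_sub_exp_ge_half (t : ℝ) (ht : 0 ≤ t) (ht1 : t ≤ 1) :
    t / 2 ≤ 1 - Real.exp (-t) := by
  have h := one_sub_exp_ge t ht
  have h1 : (0:ℝ) < 1 + t := by linarith
  have h2 : t / 2 ≤ t / (1 + t) := by
    rw [div_le_div_iff₀ (by norm_num) h1]; nlinarith
  linarith
private lemma exp_taylor2 (t : ℝ) (ht : 0 ≤ t) : |1 - Real.exp (-t) - t| ≤ t ^ 2 := by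
  have h1 : (0:ℝ) < 1 + t := by linarith
  rw [abs_le]
  constructor
  · have h := one_sub_exp_ge t ht
    have h2 : t - t^2 ≤ t/(1+t) := by rw [le_div_iff₀ h1]; nlinarith
    linarith
  · nlinarith [one_sub_exp_le t, sq_nonneg t]
private lemma log_ratio_le (x : ℝ) (hx : 0 < x) : Real.log ((x+1)/x) ≤ 1/x := by
  have h := Real.log_le_sub_one_of_pos (show (0:ℝ) < (x+1)/x by positivity)
  have e : (x+1)/x - 1 = 1/x := by field_simp; ring
  rw [e] at h; exact h
private lemma log_ratio_ge (x : ℝ) (hx : 0 < x) : 1/(x+1) ≤ Real.log ((x+1)/x) := by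
  have h := Real.log_le_sub_one_of_pos (show (0:ℝ) < x/(x+1) by positivity)
  have e : Real.log (x/(x+1)) = - Real.log ((x+1)/x) := by
    rw [← Real.log_inv]; congr 1; rw [inv_div]
  have e2 : x/(x+1) - 1 = -(1/(x+1)) := by field_simp; ring
  rw [e, e2] at h
  linarith

private lemma rpow_ratio (a b p : ℝ) (ha : 0 < a) (hb : 0 < b) :
    a ^ p = b ^ p * Real.exp (p * Real.log (a/b)) := by
  rw [Real.rpow_def_of_pos ha, Real.rpow_def_of_pos hb, ← Real.exp_add,
    Real.log_div ha.ne' hb.ne']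
  ring_nf

/-- telescoping inequality for tails: `(d/4) x^(-1-d) ≤ x^(-d) - (x+1)^(-d)` -/
private lemma tele_ineq (d : ℝ) (hd0 : 0 < d) (hd1 : d ≤ 1) (x : ℝ) (hx : 1 ≤ x) :
    (d/4) * x ^ (-1-d) ≤ x ^ (-d) - (x+1) ^ (-d) := by
  have hx0 : (0:ℝ) < x := by linarith
  set s : ℝ := d * Real.log ((x+1)/x) with hs
  have e : (x+1) ^ (-d) = x ^ (-d) * Real.exp (-s) := by
    rw [rpow_ratio (x+1) x (-d) (by linarith) hx0, hs]
    ring_nf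
  have hlogle := log_ratio_le x hx0
  have hlogge := log_ratio_ge x hx0
  have hs0 : 0 ≤ s := by
    have : 0 ≤ Real.log ((x+1)/x) := le_trans (by positivity) hlogge
    positivity
  have hs1 : s ≤ 1 := by
    have : s ≤ d * (1/x) := by
      apply mul_le_mul_of_nonneg_left hlogle hd0.le
    have h2 : d * (1/x) ≤ 1 := by
      rw [mul_one_div, div_le_one hx0]; linarith
    linarith
  have hsge : d ≤ 2*x*s := by
    have h1 : d * (1/(x+1)) ≤ s := mul_le_mul_of_nonneg_left hlogge hd0.le
    rw [mul_one_div] at h1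
    have h2 := (div_le_iff₀ (show (0:ℝ) < x+1 by linarith)).mp h1
    nlinarith
  have hhalf := one_sub_exp_ge_half s hs0 hs1
  have hxd : (0:ℝ) < x ^ (-d) := Real.rpow_pos_of_pos hx0 _
  have key : x ^ (-d) * (d/(4*x)) ≤ x ^ (-d) * (1 - Real.exp (-s)) := by
    apply mul_le_mul_of_nonneg_left _ hxd.le
    have : d/(4*x) ≤ s/2 := by
      rw [div_le_div_iff₀ (by linarith) (by norm_num)]
      linarith
    linarith
  have e2 : x ^ (-d) * (d/(4*x)) = (d/4) * x ^ (-1-d) := by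
    have : x ^ (-1-d : ℝ) = x⁻¹ * x ^ (-d) := by
      rw [show (-1-d : ℝ) = (-1) + (-d) by ring, Real.rpow_add hx0, Real.rpow_neg_one]
    rw [this]; field_simp
  rw [e]; linarith [e2 ▸ key]

/-- telescoping identity -/
private lemma sum_Ico_tele (f : ℕ → ℝ) (N N' : ℕ) (h : N ≤ N') :
    ∑ l ∈ Ico N N', (f l - f (l+1)) = f N - f N' := by
  induction N', h using Nat.le_induction with
  | base => simp
  | succ n hn ih =>
      rw [Finset.sum_Ico_succ_top hn, ih]; ring

/-- tail sum bound -/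
private lemma sum_Ico_tail (d : ℝ) (hd0 : 0 < d) (hd1 : d ≤ 1) (N N' : ℕ) (hN : 1 ≤ N) :
    ∑ l ∈ Ico N N', (l:ℝ) ^ (-1-d) ≤ (4/d) * (N:ℝ) ^ (-d) := by
  rcases le_or_gt N N' with h | h
  · have step : ∑ l ∈ Ico N N', (l:ℝ) ^ (-1-d) ≤
        ∑ l ∈ Ico N N', (4/d) * ((l:ℝ) ^ (-d) - ((l:ℝ)+1) ^ (-d)) := by
      apply Finset.sum_le_sum
      intro l hl
      have hl1 : 1 ≤ l := le_trans hN (Finset.mem_Ico.mp hl).1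
      have := tele_ineq d hd0 hd1 (l:ℝ) (by exact_mod_cast hl1)
      calc (l:ℝ) ^ (-1-d) = (4/d) * ((d/4) * (l:ℝ) ^ (-1-d)) := by field_simp
        _ ≤ (4/d) * ((l:ℝ) ^ (-d) - ((l:ℝ)+1) ^ (-d)) := by
            apply mul_le_mul_of_nonneg_left this (by positivity)
    have tele : ∑ l ∈ Ico N N', (((l:ℝ)) ^ (-d) - (((l:ℝ))+1) ^ (-d)) =
        (N:ℝ) ^ (-d) - (N':ℝ) ^ (-d) := by
      have := sum_Ico_tele (fun l => ((l:ℕ):ℝ) ^ (-d)) N N' h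
      simpa [Nat.cast_add, Nat.cast_one] using this
    rw [← Finset.mul_sum] at step
    rw [tele] at step
    have : (0:ℝ) ≤ (N':ℝ) ^ (-d) := Real.rpow_nonneg (by positivity) _
    nlinarith [show (0:ℝ) < 4/d by positivity]
  · rw [Finset.Ico_eq_empty (by omega)]
    simp
    positivity

/-- increment inequality for positive exponents -/
private lemma rpow_diff_ge (p : ℝ) (hp0 : 0 < p) (hp1 : p ≤ 1) (x : ℝ) (hx : 2 ≤ x) :
    (p/2) * x ^ (p-1) ≤ x ^ p - (x-1) ^ p := by
  have hx0 : (0:ℝ) < x := by linarith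
  have hx1 : (0:ℝ) < x - 1 := by linarith
  set s : ℝ := p * Real.log (x/(x-1)) with hs
  have e : (x-1) ^ p = x ^ p * Real.exp (-s) := by
    rw [rpow_ratio (x-1) x p hx1 hx0, hs]
    have : Real.log ((x-1)/x) = - Real.log (x/(x-1)) := by
      rw [← Real.log_inv]; congr 1; rw [inv_div]
    rw [this]; ring_nf
  have hll : Real.log (x/(x-1)) ≤ 1/(x-1) := by
    have := log_ratio_le (x-1) hx1
    simpa [show x - 1 + 1 = x by ring] using this
  have hlg : 1/x ≤ Real.log (x/(x-1)) := by
    have := log_ratio_ge (x-1) hx1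
    simpa [show x - 1 + 1 = x by ring] using this
  have hs0 : 0 ≤ s := by
    have : 0 ≤ Real.log (x/(x-1)) := le_trans (by positivity) hlg
    positivity
  have hs1 : s ≤ 1 := by
    have h2 : s ≤ p * (1/(x-1)) := mul_le_mul_of_nonneg_left hll hp0.le
    have h3 : p * (1/(x-1)) ≤ 1 := by
      rw [mul_one_div, div_le_one hx1]; linarith
    linarith
  have hsge : p ≤ x*s := by
    have h1 := mul_le_mul_of_nonneg_left hlg hp0.le
    rw [mul_one_div] at h1
    have h2 := (div_le_iff₀ hx0).mp h1
    nlinarith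
  have hhalf := one_sub_exp_ge_half s hs0 hs1
  have hxp : (0:ℝ) < x ^ p := Real.rpow_pos_of_pos hx0 _
  have key : x ^ p * (p/(2*x)) ≤ x ^ p * (1 - Real.exp (-s)) := by
    apply mul_le_mul_of_nonneg_left _ hxp.le
    have : p/(2*x) ≤ s/2 := by
      rw [div_le_div_iff₀ (by linarith) (by norm_num)]
      linarith
    linarith
  have e2 : x ^ p * (p/(2*x)) = (p/2) * x ^ (p-1) := by
    have : x ^ (p-1 : ℝ) = x ^ p * x⁻¹ := by
      rw [show (p-1 : ℝ) = p + (-1) by ring, Real.rpow_add hx0, Real.rpow_neg_one]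
    rw [this]; field_simp
  rw [e]; linarith [e2 ▸ key]

/-- partial sums of `l^e` -/
private lemma sum_Icc_pow_le (e : ℝ) (he : -1 < e) (N : ℕ) :
    ∑ l ∈ Icc 1 N, (l:ℝ) ^ e ≤ (1 + 2/(e+1)) * (N:ℝ) ^ (e+1) := by
  have hp0 : (0:ℝ) < e + 1 := by linarith
  have hK1 : (1:ℝ) ≤ 1 + 2/(e+1) := by
    have : (0:ℝ) < 2/(e+1) := by positivity
    linarith
  induction N with
  | zero => simp [Real.zero_rpow hp0.ne']
  | succ N ih =>
      rw [show N + 1 = N + 1 from rfl, Finset.sum_Icc_succ_top (by omega)]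
      have hx0 : (0:ℝ) < (N:ℝ) + 1 := by positivity
      have key : ((N:ℝ)+1) ^ e ≤ (1 + 2/(e+1)) * (((N:ℝ)+1) ^ (e+1) - (N:ℝ) ^ (e+1)) := by
        rcases le_or_gt 0 e with he0 | he0
        · -- x^{e+1} - N^{e+1} ≥ x^e
          have h1 : ((N:ℝ)+1) ^ (e+1) = ((N:ℝ)+1) ^ e * ((N:ℝ)+1) := by
            rw [Real.rpow_add hx0, Real.rpow_one]
          have h2 : (N:ℝ) ^ (e+1) ≤ ((N:ℝ)+1) ^ e * (N:ℝ) := by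
            rcases Nat.eq_zero_or_pos N with h | h
            · simp [h, Real.zero_rpow hp0.ne']
            · have hN0 : (0:ℝ) < (N:ℝ) := by exact_mod_cast h
              rw [Real.rpow_add hN0, Real.rpow_one]
              have : (N:ℝ) ^ e ≤ ((N:ℝ)+1) ^ e :=
                Real.rpow_le_rpow hN0.le (by linarith) he0
              nlinarith
          have h3 : ((N:ℝ)+1) ^ e ≤ ((N:ℝ)+1) ^ (e+1) - (N:ℝ) ^ (e+1) := by
            rw [h1]; nlinarith
          calc ((N:ℝ)+1) ^ e ≤ (((N:ℝ)+1) ^ (e+1) - (N:ℝ) ^ (e+1)) := h3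
            _ ≤ (1 + 2/(e+1)) * (((N:ℝ)+1) ^ (e+1) - (N:ℝ) ^ (e+1)) := by
                have hd0 : (0:ℝ) ≤ ((N:ℝ)+1) ^ (e+1) - (N:ℝ) ^ (e+1) :=
                  le_trans (Real.rpow_nonneg hx0.le _) h3
                exact le_mul_of_one_le_left hd0 hK1
        · -- -1 < e < 0
          rcases Nat.eq_zero_or_pos N with h | h
          · subst h
            simp only [Nat.cast_zero, zero_add]
            rw [Real.zero_rpow hp0.ne', Real.one_rpow, Real.one_rpow]
            linarith
          · have hN1 : (1:ℝ) ≤ (N:ℝ) := by exact_mod_cast h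
            have hx2 : (2:ℝ) ≤ (N:ℝ) + 1 := by linarith
            have hd := rpow_diff_ge (e+1) hp0 (by linarith) ((N:ℝ)+1) hx2
            have he1 : ((N:ℝ)+1) ^ ((e+1)-1) = ((N:ℝ)+1) ^ e := by norm_num
            have he2 : ((N:ℝ)+1) - 1 = (N:ℝ) := by ring
            rw [he1, he2] at hd
            have hpos : (0:ℝ) ≤ ((N:ℝ)+1) ^ e := Real.rpow_nonneg hx0.le _
            have : (1 + 2/(e+1)) * ((e+1)/2) = (e+1)/2 + 1 := by field_simp
            nlinarith [mul_le_mul_of_nonneg_left hd (show (0:ℝ) ≤ 1 + 2/(e+1) by linarith)]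
      have hcast : ((N+1 : ℕ):ℝ) = (N:ℝ) + 1 := by push_cast; ring
      rw [hcast]
      linarith

/-- Abel summation -/
private lemma abel_aux (a f : ℕ → ℝ) (N : ℕ) :
    ∑ l ∈ Icc 1 N, a l * f l =
      (∑ l ∈ Icc 1 N, a l) * f N +
        ∑ l ∈ Ico 1 N, (∑ k ∈ Icc 1 l, a k) * (f l - f (l+1)) := by
  induction N with
  | zero => simp
  | succ N ih =>
      rcases Nat.eq_zero_or_pos N with rfl | hN
      · simp
      · rw [Finset.sum_Icc_succ_top (show 1 ≤ N+1 by omega),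
          Finset.sum_Icc_succ_top (show 1 ≤ N+1 by omega),
          Finset.sum_Ico_succ_top (show 1 ≤ N by omega), ih]
        ring

private lemma cauchy_of_rate (g : ℕ → ℝ) (c d : ℝ) (hd : 0 < d)
    (hg : ∀ N N' : ℕ, 1 ≤ N → N ≤ N' → |g N' - g N| ≤ c * (N:ℝ)^(-d)) :
    ∃ L : ℝ, ∀ N : ℕ, 1 ≤ N → |g N - L| ≤ c * (N:ℝ)^(-d) := by
  have hc : 0 ≤ c := by
    have := hg 1 1 le_rfl le_rfl
    simp at this
    nlinarith [Real.rpow_nonneg (show (0:ℝ) ≤ 1 by norm_num) (-d), abs_nonneg (g 1 - g 1),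
      Real.one_rpow (-d)]
  have htend : Tendsto (fun N : ℕ => c * (N:ℝ)^(-d)) atTop (nhds 0) := by
    have h1 : Tendsto (fun x : ℝ => x ^ (-d)) atTop (nhds 0) := tendsto_rpow_neg_atTop hd
    have := (h1.comp tendsto_natCast_atTop_atTop).const_mul c
    simpa using this
  have hcauchy : CauchySeq g := by
    rw [Metric.cauchySeq_iff']
    intro ε hε
    have : ∀ᶠ N : ℕ in atTop, c * (N:ℝ)^(-d) < ε := htend.eventually (gt_mem_nhds hε)
    obtain ⟨N₀, hN₀⟩ := (this.and (eventually_ge_atTop 1)).exists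
    exact ⟨N₀, fun n hn => lt_of_le_of_lt (by
      rw [Real.dist_eq]; exact hg N₀ n hN₀.2 hn) hN₀.1⟩
  obtain ⟨L, hL⟩ := cauchySeq_tendsto_of_complete hcauchy
  refine ⟨L, fun N hN => ?_⟩
  have h2 : Tendsto (fun N' : ℕ => |g N' - g N|) atTop (nhds (|L - g N|)) :=
    ((hL.sub_const (g N)).abs)
  have h3 : |L - g N| ≤ c * (N:ℝ)^(-d) :=
    le_of_tendsto h2 (eventually_atTop.2 ⟨N, fun N' hN' => hg N N' hN hN'⟩)
  rwa [abs_sub_comm]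

private lemma G_asymp (C β₁ δ : ℝ) (hβ₁ : 0 < β₁) (hδ : 0 < δ) (c₂ : ℕ → ℝ)
    (K₄ : ℝ) (hK₄ : 0 < K₄)
    (hcs : ∀ N : ℕ, 1 ≤ N → |(∑ l ∈ Icc 1 N, c₂ l) - C * (N:ℝ)^β₁| ≤ K₄ * (N:ℝ)^(β₁-δ)) :
    ∃ B K₅ : ℝ, 0 < K₅ ∧ ∀ N : ℕ, 1 ≤ N →
      |(∑ l ∈ Icc 1 N, c₂ l * (l:ℝ)^(-β₁)) - β₁*C*Real.log N - B| ≤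
        K₅ * (N:ℝ)^(-(min δ 1)) := by
  set d : ℝ := min δ 1 with hd_def
  have hd0 : 0 < d := lt_min hδ one_pos
  have hd1 : d ≤ 1 := min_le_right _ _
  have hdδ : d ≤ δ := min_le_left _ _
  set f : ℕ → ℝ := fun l => (l:ℝ) ^ (-β₁) with hf_def
  set t : ℕ → ℝ := fun l => β₁ * Real.log (((l:ℝ)+1)/(l:ℝ)) with ht_def
  set E : ℕ → ℝ := fun n => (∑ l ∈ Icc 1 n, c₂ l) - C * (n:ℝ)^β₁ with hE_def
  set rr : ℕ → ℝ := fun l => (1 - Real.exp (-(t l))) - t l with hrr_def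
  have hxpos : ∀ l : ℕ, 1 ≤ l → (0:ℝ) < l := fun l hl => by exact_mod_cast hl
  have hAE : ∀ n : ℕ, (∑ l ∈ Icc 1 n, c₂ l) = C * (n:ℝ)^β₁ + E n := by
    intro n; simp only [hE_def]; ring
  have hlog_nn : ∀ l : ℕ, 1 ≤ l → 0 ≤ Real.log (((l:ℝ)+1)/(l:ℝ)) := fun l hl =>
    le_trans (by positivity) (log_ratio_ge (l:ℝ) (hxpos l hl))
  have ht0 : ∀ l : ℕ, 1 ≤ l → 0 ≤ t l := fun l hl =>
    mul_nonneg hβ₁.le (hlog_nn l hl)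
  have htle : ∀ l : ℕ, 1 ≤ l → t l ≤ β₁ / l := by
    intro l hl
    have h := mul_le_mul_of_nonneg_left (log_ratio_le (l:ℝ) (hxpos l hl)) hβ₁.le
    simpa [ht_def, mul_one_div, div_eq_mul_inv] using h
  have hfsucc : ∀ l : ℕ, 1 ≤ l → f (l+1) = f l * Real.exp (-(t l)) := by
    intro l hl
    have hx := hxpos l hl
    have h1 : ((l+1:ℕ):ℝ) = (l:ℝ)+1 := by push_cast; ring
    show ((l+1:ℕ):ℝ) ^ (-β₁) = (l:ℝ) ^ (-β₁) * Real.exp (-(t l))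
    rw [h1, rpow_ratio ((l:ℝ)+1) (l:ℝ) (-β₁) (by linarith) hx]
    congr 1
    simp only [ht_def]
    ring_nf
  have hdiff : ∀ l : ℕ, 1 ≤ l → f l - f (l+1) = f l * (1 - Real.exp (-(t l))) := by
    intro l hl; rw [hfsucc l hl]; ring
  have hfnn : ∀ l : ℕ, (0:ℝ) ≤ f l := fun l => Real.rpow_nonneg (Nat.cast_nonneg l) _
  have hexp_le_one : ∀ l : ℕ, 1 ≤ l → Real.exp (-(t l)) ≤ 1 := by
    intro l hl
    have : Real.exp (-(t l)) ≤ Real.exp 0 := Real.exp_le_exp.mpr (by linarith [ht0 l hl])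
    simpa using this
  have hdiff_nn : ∀ l : ℕ, 1 ≤ l → 0 ≤ f l - f (l+1) := by
    intro l hl
    rw [hdiff l hl]
    exact mul_nonneg (hfnn l) (by linarith [hexp_le_one l hl])
  have hdiff_le : ∀ l : ℕ, 1 ≤ l → f l - f (l+1) ≤ β₁ * (l:ℝ)^(-β₁-1) := by
    intro l hl
    have hx := hxpos l hl
    rw [hdiff l hl]
    have h1 : 1 - Real.exp (-(t l)) ≤ β₁/l := le_trans (one_sub_exp_le (t l)) (htle l hl)
    have h2 : f l * (1 - Real.exp (-(t l))) ≤ f l * (β₁/l) :=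
      mul_le_mul_of_nonneg_left h1 (hfnn l)
    have h3 : f l * (β₁/(l:ℝ)) = β₁ * (l:ℝ)^(-β₁-1) := by
      simp only [hf_def]
      rw [show (-β₁-1 : ℝ) = -β₁ + (-1) by ring, Real.rpow_add hx, Real.rpow_neg_one]
      field_simp
    rw [h3] at h2
    exact h2
  have hpow_diff : ∀ l : ℕ, 1 ≤ l → (l:ℝ)^β₁ * (f l - f (l+1)) = 1 - Real.exp (-(t l)) := by
    intro l hl
    have hx := hxpos l hl
    rw [hdiff l hl, ← mul_assoc]
    have h1 : (l:ℝ)^β₁ * f l = 1 := by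
      simp only [hf_def]
      rw [← Real.rpow_add hx]
      norm_num
    rw [h1, one_mul]
  have hrr_bound : ∀ l : ℕ, 1 ≤ l → |rr l| ≤ β₁^2 * (l:ℝ)^(-1-(1:ℝ)) := by
    intro l hl
    have hx := hxpos l hl
    have h1 := exp_taylor2 (t l) (ht0 l hl)
    have h2 : (t l)^2 ≤ (β₁/l)^2 := pow_le_pow_left₀ (ht0 l hl) (htle l hl) 2
    have h3 : (β₁/(l:ℝ))^2 = β₁^2 * (l:ℝ)^(-1-(1:ℝ)) := by
      rw [show (-1-(1:ℝ)) = -((2:ℕ):ℝ) by norm_num, Real.rpow_neg hx.le, Real.rpow_natCast]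
      field_simp
    calc |rr l| ≤ (t l)^2 := h1
      _ ≤ (β₁/l)^2 := h2
      _ = _ := h3
  have htsum : ∀ N : ℕ, 1 ≤ N → ∑ l ∈ Ico 1 N, t l = β₁ * Real.log N := by
    intro N hN
    have hcongr : ∀ l ∈ Ico 1 N, t l =
        β₁ * ((fun l : ℕ => -Real.log l) l - (fun l : ℕ => -Real.log l) (l+1)) := by
      intro l hl
      have hl1 : 1 ≤ l := (Finset.mem_Ico.mp hl).1
      have hx := hxpos l hl1
      simp only [ht_def]
      rw [Real.log_div (by linarith) hx.ne']
      push_cast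
      ring
    rw [Finset.sum_congr rfl hcongr, ← Finset.mul_sum, sum_Ico_tele _ 1 N hN]
    simp
  -- main identity
  have hmain : ∀ N : ℕ, 1 ≤ N →
      (∑ l ∈ Icc 1 N, c₂ l * f l) =
        C + E N * f N + C * (β₁ * Real.log N) +
          C * (∑ l ∈ Ico 1 N, rr l) + (∑ l ∈ Ico 1 N, E l * (f l - f (l+1))) := by
    intro N hN
    have hx := hxpos N hN
    have hA := abel_aux c₂ f N
    have h1 : (∑ l ∈ Icc 1 N, c₂ l) * f N = C + E N * f N := by
      rw [hAE N, add_mul]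
      have h2 : C * (N:ℝ)^β₁ * f N = C := by
        simp only [hf_def]
        rw [mul_assoc, ← Real.rpow_add hx]
        norm_num
      rw [h2]
    have h2 : ∀ l ∈ Ico 1 N, (∑ k ∈ Icc 1 l, c₂ k) * (f l - f (l+1)) =
        C * t l + C * rr l + E l * (f l - f (l+1)) := by
      intro l hl
      have hl1 : 1 ≤ l := (Finset.mem_Ico.mp hl).1
      have h3 : (l:ℝ)^β₁ * (f l - f (l+1)) = t l + rr l := by
        rw [hpow_diff l hl1]; simp only [hrr_def]; ring
      calc (∑ k ∈ Icc 1 l, c₂ k) * (f l - f (l+1))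
          = C * ((l:ℝ)^β₁ * (f l - f (l+1))) + E l * (f l - f (l+1)) := by
            rw [hAE l]; ring
        _ = _ := by rw [h3]; ring
    rw [hA, h1, Finset.sum_congr rfl h2, Finset.sum_add_distrib, Finset.sum_add_distrib,
      show ∑ x ∈ Ico 1 N, C * t x = C * ∑ x ∈ Ico 1 N, t x from (Finset.mul_sum _ _ _).symm,
      show ∑ x ∈ Ico 1 N, C * rr x = C * ∑ x ∈ Ico 1 N, rr x from (Finset.mul_sum _ _ _).symm,
      htsum N hN]
    ring
  -- rates
  set R : ℕ → ℝ := fun N => ∑ l ∈ Ico 1 N, rr l with hR_def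
  set V : ℕ → ℝ := fun N => ∑ l ∈ Ico 1 N, E l * (f l - f (l+1)) with hV_def
  have hEbound : ∀ l : ℕ, 1 ≤ l → |E l| ≤ K₄ * (l:ℝ)^(β₁-δ) := fun l hl => hcs l hl
  have hRrate : ∀ N N' : ℕ, 1 ≤ N → N ≤ N' → |R N' - R N| ≤ (4*β₁^2) * (N:ℝ)^(-d) := by
    intro N N' hN hNN'
    have hsplit := Finset.sum_Ico_consecutive rr (show 1 ≤ N from hN) hNN'
    have h1 : R N' - R N = ∑ l ∈ Ico N N', rr l := by
      simp only [hR_def]; linarith [hsplit]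
    rw [h1]
    calc |∑ l ∈ Ico N N', rr l| ≤ ∑ l ∈ Ico N N', |rr l| := Finset.abs_sum_le_sum_abs _ _
      _ ≤ ∑ l ∈ Ico N N', β₁^2 * (l:ℝ)^(-1-(1:ℝ)) := by
          apply Finset.sum_le_sum
          intro l hl
          exact hrr_bound l (le_trans hN (Finset.mem_Ico.mp hl).1)
      _ = β₁^2 * ∑ l ∈ Ico N N', (l:ℝ)^(-1-(1:ℝ)) := by rw [← Finset.mul_sum]
      _ ≤ β₁^2 * ((4/1) * (N:ℝ)^(-(1:ℝ))) := by
          apply mul_le_mul_of_nonneg_left (sum_Ico_tail 1 one_pos le_rfl N N' hN) (by positivity)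
      _ ≤ (4*β₁^2) * (N:ℝ)^(-d) := by
          have : (N:ℝ)^(-(1:ℝ)) ≤ (N:ℝ)^(-d) :=
            Real.rpow_le_rpow_of_exponent_le (by exact_mod_cast hN) (by linarith)
          nlinarith [sq_nonneg β₁]
  have hVrate : ∀ N N' : ℕ, 1 ≤ N → N ≤ N' →
      |V N' - V N| ≤ (K₄*β₁*(4/d)) * (N:ℝ)^(-d) := by
    intro N N' hN hNN'
    have hsplit := Finset.sum_Ico_consecutive (fun l => E l * (f l - f (l+1)))
      (show 1 ≤ N from hN) hNN'
    have h1 : V N' - V N = ∑ l ∈ Ico N N', E l * (f l - f (l+1)) := by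
      simp only [hV_def]; linarith [hsplit]
    rw [h1]
    have hterm : ∀ l ∈ Ico N N', |E l * (f l - f (l+1))| ≤ (K₄*β₁) * (l:ℝ)^(-1-d) := by
      intro l hl
      have hl1 : 1 ≤ l := le_trans hN (Finset.mem_Ico.mp hl).1
      have hx := hxpos l hl1
      rw [abs_mul, abs_of_nonneg (hdiff_nn l hl1)]
      have h2 : |E l| * (f l - f (l+1)) ≤ (K₄ * (l:ℝ)^(β₁-δ)) * (β₁ * (l:ℝ)^(-β₁-1)) := by
        apply mul_le_mul (hEbound l hl1) (hdiff_le l hl1) (hdiff_nn l hl1) (by positivity)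
      have h3 : (K₄ * (l:ℝ)^(β₁-δ)) * (β₁ * (l:ℝ)^(-β₁-1)) = (K₄*β₁) * (l:ℝ)^(-1-δ) := by
        rw [show ((-1:ℝ)-δ) = (β₁-δ) + (-β₁-1) by ring, Real.rpow_add hx]
        ring
      have h4 : (l:ℝ)^(-1-δ) ≤ (l:ℝ)^(-1-d) :=
        Real.rpow_le_rpow_of_exponent_le (by exact_mod_cast hl1) (by linarith)
      calc |E l| * (f l - f (l+1)) ≤ (K₄ * (l:ℝ)^(β₁-δ)) * (β₁ * (l:ℝ)^(-β₁-1)) := h2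
        _ = (K₄*β₁) * (l:ℝ)^(-1-δ) := h3
        _ ≤ (K₄*β₁) * (l:ℝ)^(-1-d) := by
            apply mul_le_mul_of_nonneg_left h4 (by positivity)
    calc |∑ l ∈ Ico N N', E l * (f l - f (l+1))|
        ≤ ∑ l ∈ Ico N N', |E l * (f l - f (l+1))| := Finset.abs_sum_le_sum_abs _ _
      _ ≤ ∑ l ∈ Ico N N', (K₄*β₁) * (l:ℝ)^(-1-d) := Finset.sum_le_sum hterm
      _ = (K₄*β₁) * ∑ l ∈ Ico N N', (l:ℝ)^(-1-d) := by rw [← Finset.mul_sum]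
      _ ≤ (K₄*β₁) * ((4/d) * (N:ℝ)^(-d)) := by
          apply mul_le_mul_of_nonneg_left (sum_Ico_tail d hd0 hd1 N N' hN) (by positivity)
      _ = (K₄*β₁*(4/d)) * (N:ℝ)^(-d) := by ring
  obtain ⟨Rinf, hRinf⟩ := cauchy_of_rate R (4*β₁^2) d hd0 hRrate
  obtain ⟨Vinf, hVinf⟩ := cauchy_of_rate V (K₄*β₁*(4/d)) d hd0 hVrate
  refine ⟨C + C * Rinf + Vinf, K₄ + |C| * (4*β₁^2) + K₄*β₁*(4/d), by positivity, ?_⟩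
  intro N hN
  have hx := hxpos N hN
  have hmainN := hmain N hN
  have hId : (∑ l ∈ Icc 1 N, c₂ l * f l) - β₁*C*Real.log N - (C + C * Rinf + Vinf) =
      E N * f N + C * (R N - Rinf) + (V N - Vinf) := by
    rw [hmainN]; simp only [hR_def, hV_def]; ring
  rw [hId]
  have b1 : |E N * f N| ≤ K₄ * (N:ℝ)^(-d) := by
    rw [abs_mul, abs_of_nonneg (hfnn N)]
    have h2 : |E N| * f N ≤ (K₄ * (N:ℝ)^(β₁-δ)) * (N:ℝ)^(-β₁) :=
      mul_le_mul_of_nonneg_right (hEbound N hN) (hfnn N)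
    have h3 : (K₄ * (N:ℝ)^(β₁-δ)) * (N:ℝ)^(-β₁) = K₄ * (N:ℝ)^(-δ) := by
      rw [show (-δ:ℝ) = (β₁-δ) + (-β₁) by ring, Real.rpow_add hx]
      ring
    have h4 : (N:ℝ)^(-δ:ℝ) ≤ (N:ℝ)^(-d) :=
      Real.rpow_le_rpow_of_exponent_le (by exact_mod_cast hN) (by linarith)
    rw [h3] at h2
    calc |E N| * f N ≤ K₄ * (N:ℝ)^(-δ) := h2
      _ ≤ K₄ * (N:ℝ)^(-d) := mul_le_mul_of_nonneg_left h4 hK₄.le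
  have b2 : |C * (R N - Rinf)| ≤ |C| * ((4*β₁^2) * (N:ℝ)^(-d)) := by
    rw [abs_mul]
    exact mul_le_mul_of_nonneg_left (hRinf N hN) (abs_nonneg C)
  have b3 : |V N - Vinf| ≤ (K₄*β₁*(4/d)) * (N:ℝ)^(-d) := hVinf N hN
  calc |E N * f N + C * (R N - Rinf) + (V N - Vinf)|
      ≤ |E N * f N| + |C * (R N - Rinf)| + |V N - Vinf| := by
        exact le_trans (abs_add_le _ _) (by linarith [abs_add_le (E N * f N) (C * (R N - Rinf))])
    _ ≤ (K₄ + |C| * (4*β₁^2) + K₄*β₁*(4/d)) * (N:ℝ)^(-d) := by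
        rw [add_mul, add_mul]
        have := b1; have := b2; have := b3
        nlinarith [Real.rpow_nonneg (Nat.cast_nonneg N) (-d)]

private lemma csum_asymp (h : ℕ → ℕ → ℝ) (C δ β₁ β₂ ν D : ℝ) (c₂ : ℕ → ℝ)
    (hδ : 0 < δ) (hν : 0 < ν) (hD : 0 ≤ D)
    (K1 : ℝ)
    (hI : ∀ L M : ℝ, 1 ≤ L → 1 ≤ M →
      |(∑ l ∈ Icc 1 ⌊L⌋₊, ∑ m ∈ Icc 1 ⌊M⌋₊, h l m) - C * L ^ β₁ * M ^ β₂| ≤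
        K1 * L ^ β₁ * M ^ β₂ * (min L M) ^ (-δ))
    (K2 : ℝ) (hK2 : 0 < K2)
    (hII : ∀ (M : ℝ) (l : ℕ), 1 ≤ M → 1 ≤ l → (l : ℝ) ≤ M ^ ν →
      |(∑ m ∈ Icc 1 ⌊M⌋₊, h l m) - c₂ l * M ^ β₂| ≤ K2 * (l:ℝ) ^ D * M ^ (β₂ - δ)) :
    ∀ N : ℕ, 1 ≤ N → |(∑ l ∈ Icc 1 N, c₂ l) - C * (N:ℝ)^β₁| ≤ (K1 + K2) * (N:ℝ)^(β₁-δ) := by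
  set A : ℝ := max 1 (max (1/ν) ((D+1-β₁+δ)/δ)) with hA_def
  have hA1 : 1 ≤ A := le_max_left _ _
  have hAν : 1/ν ≤ A := le_trans (le_max_left _ _) (le_max_right _ _)
  have hAδ : (D+1-β₁+δ)/δ ≤ A := le_trans (le_max_right _ _) (le_max_right _ _)
  clear_value A
  intro N hN
  set x : ℝ := (N:ℝ) with hx_def
  have hx1 : 1 ≤ x := by rw [hx_def]; exact_mod_cast hN
  have hx0 : 0 < x := by linarith
  set M : ℝ := x ^ A with hM_def
  have hM1 : 1 ≤ M := by rw [hM_def]; exact Real.one_le_rpow hx1 (by linarith)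
  have hM0 : 0 < M := by linarith
  have hxM : x ≤ M := by
    rw [hM_def]
    calc x = x ^ (1:ℝ) := (Real.rpow_one x).symm
      _ ≤ x ^ A := Real.rpow_le_rpow_of_exponent_le hx1 hA1
  have hMb0 : 0 < M ^ β₂ := Real.rpow_pos_of_pos hM0 _
  have hMν : M ^ ν = x ^ (A * ν) := by rw [hM_def, ← Real.rpow_mul hx0.le]
  have hMδ : M ^ (-δ) = x ^ (A * (-δ)) := by rw [hM_def, ← Real.rpow_mul hx0.le]
  have hMsplit : M ^ (β₂-δ) = M ^ β₂ * M ^ (-δ) := by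
    rw [show (β₂-δ:ℝ) = β₂ + (-δ) by ring, Real.rpow_add hM0]
  have hfloorx : ⌊x⌋₊ = N := by rw [hx_def]; exact Nat.floor_natCast N
  clear_value x
  clear_value M
  have hterm : ∀ l ∈ Icc 1 N, |(∑ m ∈ Icc 1 ⌊M⌋₊, h l m) - c₂ l * M ^ β₂| ≤
      K2 * x ^ D * M ^ (β₂-δ) := by
    intro l hl
    obtain ⟨hl1, hlN⟩ := Finset.mem_Icc.mp hl
    have hlx : (l:ℝ) ≤ x := by rw [hx_def]; exact_mod_cast hlN
    have hlM : (l:ℝ) ≤ M ^ ν := by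
      have hAν1 : 1 ≤ A * ν := by
        have := (div_le_iff₀ hν).mp hAν
        linarith
      calc (l:ℝ) ≤ x := hlx
        _ = x ^ (1:ℝ) := (Real.rpow_one x).symm
        _ ≤ x ^ (A*ν) := Real.rpow_le_rpow_of_exponent_le hx1 hAν1
        _ = M ^ ν := hMν.symm
    have hb := hII M l hM1 hl1 hlM
    have hld : (l:ℝ)^D ≤ x^D := Real.rpow_le_rpow (Nat.cast_nonneg l) hlx hD
    have hMd : (0:ℝ) ≤ M^(β₂-δ) := (Real.rpow_pos_of_pos hM0 _).le
    calc |(∑ m ∈ Icc 1 ⌊M⌋₊, h l m) - c₂ l * M ^ β₂| ≤ K2 * (l:ℝ)^D * M^(β₂-δ) := hb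
      _ ≤ K2 * x^D * M^(β₂-δ) :=
          mul_le_mul_of_nonneg_right (mul_le_mul_of_nonneg_left hld hK2.le) hMd
  have step1 : |(∑ l ∈ Icc 1 N, ∑ m ∈ Icc 1 ⌊M⌋₊, h l m) -
      (∑ l ∈ Icc 1 N, c₂ l) * M ^ β₂| ≤ (K2 * x^D * M^(β₂-δ)) * x := by
    have hrw : (∑ l ∈ Icc 1 N, ∑ m ∈ Icc 1 ⌊M⌋₊, h l m) - (∑ l ∈ Icc 1 N, c₂ l) * M ^ β₂ =
        ∑ l ∈ Icc 1 N, ((∑ m ∈ Icc 1 ⌊M⌋₊, h l m) - c₂ l * M ^ β₂) := by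
      rw [Finset.sum_mul, ← Finset.sum_sub_distrib]
    rw [hrw]
    calc |∑ l ∈ Icc 1 N, ((∑ m ∈ Icc 1 ⌊M⌋₊, h l m) - c₂ l * M ^ β₂)|
        ≤ ∑ l ∈ Icc 1 N, |(∑ m ∈ Icc 1 ⌊M⌋₊, h l m) - c₂ l * M ^ β₂| :=
          Finset.abs_sum_le_sum_abs _ _
      _ ≤ ∑ l ∈ Icc 1 N, (K2 * x^D * M^(β₂-δ)) := Finset.sum_le_sum hterm
      _ = (N:ℝ) * (K2 * x^D * M^(β₂-δ)) := by
          rw [Finset.sum_const, Nat.card_Icc]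
          simp
      _ = (K2 * x^D * M^(β₂-δ)) * x := by rw [hx_def]; ring
  have step2 : |(∑ l ∈ Icc 1 N, ∑ m ∈ Icc 1 ⌊M⌋₊, h l m) - C * x^β₁ * M^β₂| ≤
      K1 * x^β₁ * M^β₂ * x^(-δ) := by
    have hb := hI x M hx1 hM1
    rw [hfloorx, min_eq_left hxM] at hb
    exact hb
  have combined : |(∑ l ∈ Icc 1 N, c₂ l) - C * x^β₁| * M^β₂ ≤
      K1 * x^β₁ * M^β₂ * x^(-δ) + (K2 * x^D * M^(β₂-δ)) * x := by
    have habs : |(∑ l ∈ Icc 1 N, c₂ l) * M^β₂ - C * x^β₁ * M^β₂| =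
        |(∑ l ∈ Icc 1 N, c₂ l) - C * x^β₁| * M^β₂ := by
      rw [show (∑ l ∈ Icc 1 N, c₂ l) * M^β₂ - C * x^β₁ * M^β₂ =
        ((∑ l ∈ Icc 1 N, c₂ l) - C * x^β₁) * M^β₂ from by ring, abs_mul, abs_of_pos hMb0]
    rw [← habs]
    calc |(∑ l ∈ Icc 1 N, c₂ l) * M^β₂ - C * x^β₁ * M^β₂|
        ≤ |(∑ l ∈ Icc 1 N, c₂ l) * M^β₂ - (∑ l ∈ Icc 1 N, ∑ m ∈ Icc 1 ⌊M⌋₊, h l m)| +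
          |(∑ l ∈ Icc 1 N, ∑ m ∈ Icc 1 ⌊M⌋₊, h l m) - C * x^β₁ * M^β₂| :=
          abs_sub_le _ _ _
      _ ≤ (K2 * x^D * M^(β₂-δ)) * x + K1 * x^β₁ * M^β₂ * x^(-δ) := by
          rw [abs_sub_comm] at step1
          exact add_le_add step1 step2
      _ = _ := by ring
  have e1 : K1 * x^β₁ * M^β₂ * x^(-δ) = K1 * x^(β₁-δ) * M^β₂ := by
    rw [show (β₁-δ:ℝ) = β₁ + (-δ) by ring, Real.rpow_add hx0]
    ring
  have e2 : (K2 * x^D * M^(β₂-δ)) * x ≤ K2 * x^(β₁-δ) * M^β₂ := by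
    have hkey : x^D * x^(A*(-δ)) * x = x^(D + A*(-δ) + 1) := by
      rw [Real.rpow_add hx0, Real.rpow_add hx0, Real.rpow_one]
    have hexp : D + A*(-δ) + 1 ≤ β₁ - δ := by
      have h2 := (div_le_iff₀ hδ).mp hAδ
      nlinarith
    have hkey2 : x^D * x^(A*(-δ)) * x ≤ x^(β₁-δ) := by
      rw [hkey]
      exact Real.rpow_le_rpow_of_exponent_le hx1 hexp
    calc (K2 * x^D * M^(β₂-δ)) * x = K2 * (x^D * x^(A*(-δ)) * x) * M^β₂ := by
          rw [hMsplit, hMδ]; ring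
      _ ≤ K2 * x^(β₁-δ) * M^β₂ :=
          mul_le_mul_of_nonneg_right (mul_le_mul_of_nonneg_left hkey2 hK2.le) hMb0.le
  have hsum : K1 * x^(β₁-δ) * M^β₂ + K2 * x^(β₁-δ) * M^β₂ =
      (K1+K2) * x^(β₁-δ) * M^β₂ := by ring
  have final : |(∑ l ∈ Icc 1 N, c₂ l) - C * x^β₁| * M^β₂ ≤
      ((K1 + K2) * x^(β₁-δ)) * M^β₂ := by
    calc |(∑ l ∈ Icc 1 N, c₂ l) - C * x^β₁| * M^β₂
        ≤ K1 * x^β₁ * M^β₂ * x^(-δ) + (K2 * x^D * M^(β₂-δ)) * x := combined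
      _ ≤ K1 * x^(β₁-δ) * M^β₂ + K2 * x^(β₁-δ) * M^β₂ := by rw [e1] at *; linarith
      _ = ((K1 + K2) * x^(β₁-δ)) * M^β₂ := by ring
  exact le_of_mul_le_mul_right final hMb0

set_option maxHeartbeats 3200000 in
/-- **Lemma 9.3 (lem6b).** Asymptotic evaluation of the sum `T₁`. -/
theorem T1_asymptotic
    (h : ℕ → ℕ → ℝ) (hpos : ∀ l m, 0 ≤ h l m)
    (C δ β₁ β₂ ν D : ℝ) (hδ : 0 < δ) (hβ₁ : 0 < β₁) (hβ₂ : 0 < β₂)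
    (hν : 0 < ν) (hD : 0 ≤ D)
    (c₁ c₂ : ℕ → ℝ) (hc₁ : ∀ m, 0 ≤ c₁ m) (hc₂ : ∀ l, 0 ≤ c₂ l)
    (hI : CondI h C δ β₁ β₂) (hII : CondII h δ β₁ β₂ ν D c₁ c₂)
    (μ : ℝ) (hμ0 : 0 < β₁ * μ) (hμhalf : β₁ * μ < 1 / 2)
    (hμ1 : μ * (1 + ν * β₁ / β₂) ≤ ν / β₂)
    (hμ2 : μ * (D - β₁ + 1 + δ * β₁ / β₂) < δ / (2 * β₂)) :
    ∃ B' : ℝ, ∃ ϑ > (0 : ℝ),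
      (fun P : ℝ => T1 h β₁ β₂ μ P - (β₁ * C * μ * P * Real.log P + B' * P)) =O[atTop]
        fun P : ℝ => P ^ ((1 : ℝ) - ϑ) := by
  classical
  obtain ⟨K1, hK1pos, hI1⟩ := hI
  obtain ⟨⟨Ka, hKapos, _⟩, K2, hK2pos, hII2⟩ := hII
  have hμ : 0 < μ := by nlinarith
  have hβ₂0 : β₂ ≠ 0 := hβ₂.ne'
  have hcs := csum_asymp h C δ β₁ β₂ ν D c₂ hδ hν hD K1 hI1 K2 hK2pos hII2
  obtain ⟨B, K5, hK5pos, hG⟩ := G_asymp C β₁ δ hβ₁ hδ c₂ (K1+K2) (by linarith) hcs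
  set d : ℝ := min δ 1 with hd_def
  clear_value d
  have hd0 : 0 < d := by rw [hd_def]; exact lt_min hδ one_pos
  have hd1 : d ≤ 1 := by rw [hd_def]; exact min_le_right _ _
  set q : ℝ := δ / β₂ with hq_def
  clear_value q
  have hq0 : 0 < q := by rw [hq_def]; positivity
  set ee : ℝ := D - β₁ + δ*β₁/β₂ with hee_def
  clear_value ee
  set σ' : ℝ := q/(2*(μ+1)) with hσ_def
  clear_value σ'
  have hσ0 : 0 < σ' := by rw [hσ_def]; positivity
  set estar : ℝ := max ee (σ' - 1) with hestar_def
  clear_value estar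
  have hestar : -1 < estar := by
    rw [hestar_def]
    exact lt_of_lt_of_le (by linarith) (le_max_right ee (σ' - 1))
  have hestar1 : 0 < estar + 1 := by linarith
  have hμe : μ * (estar + 1) ≤ q / 2 := by
    have h1 : μ * (ee + 1) ≤ q/2 := by
      have heq : ee + 1 = D - β₁ + 1 + δ*β₁/β₂ := by rw [hee_def]; ring
      have heq2 : q/2 = δ/(2*β₂) := by rw [hq_def]; ring
      rw [heq, heq2]; linarith
    have h2 : μ * (σ' - 1 + 1) ≤ q/2 := by
      rw [hσ_def, show μ * (q/(2*(μ+1)) - 1 + 1) = (μ*q)/(2*(μ+1)) from by ring,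
        div_le_div_iff₀ (by positivity) (by norm_num : (0:ℝ) < 2)]
      nlinarith
    rcases max_cases ee (σ' - 1) with ⟨hmax, _⟩ | ⟨hmax, _⟩ <;>
      rw [hestar_def, hmax]
    · exact h1
    · exact h2
  set ϑ : ℝ := min (min (μ*d) μ) (min (q/2) (1/2 - μ*β₁)) with hϑ_def
  clear_value ϑ
  have hϑ0 : 0 < ϑ := by
    rw [hϑ_def]
    exact lt_min (lt_min (by positivity) hμ) (lt_min (by positivity) (by linarith))
  have hϑ1 : ϑ ≤ μ*d := by
    rw [hϑ_def]; exact le_trans (min_le_left _ _) (min_le_left _ _)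
  have hϑ2 : ϑ ≤ μ := by
    rw [hϑ_def]; exact le_trans (min_le_left _ _) (min_le_right _ _)
  have hϑ3 : ϑ ≤ q/2 := by
    rw [hϑ_def]; exact le_trans (min_le_right _ _) (min_le_left _ _)
  have hϑ4 : ϑ ≤ 1/2 - μ*β₁ := by
    rw [hϑ_def]; exact le_trans (min_le_right _ _) (min_le_right _ _)
  refine ⟨B, ϑ, hϑ0, ?_⟩
  rw [Asymptotics.isBigO_iff]
  refine ⟨(|C| + K1) + K2*(1+2/(estar+1)) + 2*K5 + 2*(|β₁*C|), ?_⟩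
  filter_upwards [eventually_ge_atTop (max 2 ((2:ℝ) ^ (1/μ)))] with P hP
  have hP2 : (2:ℝ) ≤ P := le_trans (le_max_left _ _) hP
  have hP1 : (1:ℝ) ≤ P := by linarith
  have hP0 : (0:ℝ) < P := by linarith
  have hPμ2 : (2:ℝ) ≤ P ^ μ := by
    have h1 : (2:ℝ) ^ (1/μ) ≤ P := le_trans (le_max_right _ _) hP
    have h2 : ((2:ℝ) ^ (1/μ)) ^ μ ≤ P ^ μ :=
      Real.rpow_le_rpow (by positivity) h1 hμ.le
    rwa [← Real.rpow_mul (by norm_num : (0:ℝ) ≤ 2), one_div,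
      inv_mul_cancel₀ hμ.ne', Real.rpow_one] at h2
  have hPμ1 : (1:ℝ) ≤ P ^ μ := by linarith
  have hPμ0 : (0:ℝ) < P ^ μ := by linarith
  set NP : ℕ := ⌊P ^ μ⌋₊ with hNP_def
  clear_value NP
  have hNP1 : 1 ≤ NP := by
    rw [hNP_def]; exact Nat.le_floor (by exact_mod_cast hPμ1)
  have hNPle : (NP:ℝ) ≤ P ^ μ := by rw [hNP_def]; exact Nat.floor_le (by positivity)
  have hNPge : P ^ μ - 1 ≤ (NP:ℝ) := by
    rw [hNP_def]; linarith [(Nat.lt_floor_add_one (P ^ μ)).le]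
  have hNPhalf : P ^ μ / 2 ≤ (NP:ℝ) := by linarith
  have hNPpos : (0:ℝ) < (NP:ℝ) := by linarith
  set M1 : ℝ := P ^ (1/(2*β₂)) with hM1_def
  clear_value M1
  have hM1b : M1 ^ β₂ = P ^ ((1:ℝ)/2) := by
    rw [hM1_def, ← Real.rpow_mul hP0.le]
    congr 1
    field_simp
  have hM1ge1 : 1 ≤ M1 := by
    rw [hM1_def]; exact Real.one_le_rpow hP1 (by positivity)
  have hM1pos : (0:ℝ) < M1 := by linarith
  have hPhalf1 : (1:ℝ) ≤ P ^ ((1:ℝ)/2) := Real.one_le_rpow hP1 (by norm_num)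
  -- quantities per l
  set X : ℕ → ℝ := fun l => P * (l:ℝ) ^ (-β₁) with hX_def
  clear_value X
  set M2 : ℕ → ℝ := fun l => (X l) ^ (1/β₂) with hM2_def
  clear_value M2
  -- basic facts for l in range
  have hlfacts : ∀ l : ℕ, l ∈ Icc 1 NP →
      (0:ℝ) < l ∧ (l:ℝ) ≤ P ^ μ ∧ (l:ℝ)^β₁ ≤ P ^ ((1:ℝ)/2) ∧ 0 < X l ∧
      M2 l ^ β₂ = X l ∧ P ^ ((1:ℝ)/2) ≤ X l ∧ M1 ≤ M2 l ∧ 1 ≤ M2 l := by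
    intro l hl
    obtain ⟨hl1, hlNP⟩ := Finset.mem_Icc.mp hl
    have hl0 : (0:ℝ) < l := by exact_mod_cast hl1
    have hlP : (l:ℝ) ≤ P ^ μ := le_trans (by exact_mod_cast hlNP) hNPle
    have hlb : (l:ℝ)^β₁ ≤ P ^ ((1:ℝ)/2) := by
      calc (l:ℝ)^β₁ ≤ (P^μ)^β₁ := Real.rpow_le_rpow hl0.le hlP hβ₁.le
        _ = P ^ (μ*β₁) := by rw [← Real.rpow_mul hP0.le]
        _ ≤ P ^ ((1:ℝ)/2) := Real.rpow_le_rpow_of_exponent_le hP1 (by linarith)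
    have hX0 : 0 < X l := by simp only [hX_def]; positivity
    have hM2b : M2 l ^ β₂ = X l := by
      simp only [hM2_def, one_div]
      exact Real.rpow_inv_rpow hX0.le hβ₂0
    have hXge : P ^ ((1:ℝ)/2) ≤ X l := by
      have hlb0 : (0:ℝ) < (l:ℝ)^β₁ := Real.rpow_pos_of_pos hl0 _
      simp only [hX_def]
      rw [Real.rpow_neg hl0.le, ← div_eq_mul_inv, le_div_iff₀ hlb0]
      calc P ^ ((1:ℝ)/2) * (l:ℝ)^β₁ ≤ P ^ ((1:ℝ)/2) * P ^ ((1:ℝ)/2) :=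
          mul_le_mul_of_nonneg_left hlb (by positivity)
        _ = P := by rw [← Real.rpow_add hP0]; norm_num
    have hM2geM1 : M1 ≤ M2 l := by
      have hM1alt : M1 = (P ^ ((1:ℝ)/2)) ^ (1/β₂) := by
        rw [hM1_def, ← Real.rpow_mul hP0.le]
        congr 1
        field_simp
      simp only [hM1alt, hM2_def]
      exact Real.rpow_le_rpow (by positivity) hXge (by positivity)
    exact ⟨hl0, hlP, hlb, hX0, hM2b, hXge, hM2geM1, le_trans hM1ge1 hM2geM1⟩
  -- Step A : inner tsum equals difference of partial sums
  have hstepA : ∀ l ∈ Icc 1 NP,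
      (∑' m : ℕ, if P ^ ((1:ℝ)/2) < (m:ℝ)^β₂ ∧ (m:ℝ)^β₂ ≤ P * (l:ℝ)^(-β₁)
        then h l m else 0) =
      (∑ m ∈ Icc 1 ⌊M2 l⌋₊, h l m) - (∑ m ∈ Icc 1 ⌊M1⌋₊, h l m) := by
    intro l hl
    obtain ⟨hl0, hlP, hlb, hX0, hM2b, hXge, hM2geM1, hM2ge1⟩ := hlfacts l hl
    have hM2nn : (0:ℝ) ≤ M2 l := by linarith
    have hfl : ⌊M1⌋₊ ≤ ⌊M2 l⌋₊ := Nat.floor_mono hM2geM1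
    have hiff : ∀ m : ℕ,
        (P ^ ((1:ℝ)/2) < (m:ℝ)^β₂ ∧ (m:ℝ)^β₂ ≤ P * (l:ℝ)^(-β₁)) ↔
          m ∈ Finset.Ioc ⌊M1⌋₊ ⌊M2 l⌋₊ := by
      intro m
      rw [Finset.mem_Ioc]
      have hXX : P * (l:ℝ)^(-β₁) = M2 l ^ β₂ := by rw [hM2b]; simp only [hX_def]
      constructor
      · rintro ⟨h1, h2⟩
        constructor
        · rw [Nat.floor_lt hM1pos.le]
          rw [← hM1b] at h1
          exact (Real.rpow_lt_rpow_iff hM1pos.le (Nat.cast_nonneg m) hβ₂).mp h1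
        · rw [Nat.le_floor_iff hM2nn]
          rw [hXX] at h2
          exact (Real.rpow_le_rpow_iff (Nat.cast_nonneg m) hM2nn hβ₂).mp h2
      · rintro ⟨h1, h2⟩
        have hm1 : M1 < (m:ℝ) := (Nat.floor_lt hM1pos.le).mp h1
        have hm2 : (m:ℝ) ≤ M2 l := (Nat.le_floor_iff hM2nn).mp h2
        constructor
        · rw [← hM1b]
          exact Real.rpow_lt_rpow hM1pos.le hm1 hβ₂
        · rw [hXX]
          exact Real.rpow_le_rpow (Nat.cast_nonneg m) hm2 hβ₂.le
    have htsum : (∑' m : ℕ, if P ^ ((1:ℝ)/2) < (m:ℝ)^β₂ ∧ (m:ℝ)^β₂ ≤ P * (l:ℝ)^(-β₁)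
        then h l m else 0) = ∑ m ∈ Finset.Ioc ⌊M1⌋₊ ⌊M2 l⌋₊, h l m := by
      rw [tsum_eq_sum (s := Finset.Ioc ⌊M1⌋₊ ⌊M2 l⌋₊)
        (fun m hm => if_neg (fun hc => hm ((hiff m).mp hc)))]
      exact Finset.sum_congr rfl (fun m hm => if_pos ((hiff m).mpr hm))
    rw [htsum]
    have hIcc : ∀ n : ℕ, Finset.Icc 1 n = Finset.Ioc 0 n := fun n => Finset.Icc_add_one_left_eq_Ioc 0 n
    rw [hIcc, hIcc]
    have hsplit := Finset.sum_Ioc_consecutive (fun m => h l m) (Nat.zero_le ⌊M1⌋₊) hfl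
    linarith [hsplit]
  -- Step D : per-l main-term approximation
  have hstepD : ∀ l ∈ Icc 1 NP,
      |(∑ m ∈ Icc 1 ⌊M2 l⌋₊, h l m) - c₂ l * X l| ≤
        (K2 * P^((1:ℝ)-q)) * (l:ℝ)^estar := by
    intro l hl
    obtain ⟨hl0, hlP, hlb, hX0, hM2b, hXge, hM2geM1, hM2ge1⟩ := hlfacts l hl
    have hl1 : 1 ≤ l := (Finset.mem_Icc.mp hl).1
    have hl1' : (1:ℝ) ≤ (l:ℝ) := by exact_mod_cast hl1
    have hlM2ν : (l:ℝ) ≤ M2 l ^ ν := by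
      have hXb : P ^ ((1:ℝ) - μ*β₁) ≤ X l := by
        have h1 : (l:ℝ)^β₁ ≤ P ^ (μ*β₁) := by
          calc (l:ℝ)^β₁ ≤ (P^μ)^β₁ := Real.rpow_le_rpow hl0.le hlP hβ₁.le
            _ = P ^ (μ*β₁) := by rw [← Real.rpow_mul hP0.le]
        have h2 : (0:ℝ) < (l:ℝ)^β₁ := Real.rpow_pos_of_pos hl0 _
        have h4 : (P ^ (μ*β₁))⁻¹ ≤ ((l:ℝ)^β₁)⁻¹ := inv_anti₀ h2 h1
        have h5 : P * (P ^ (μ*β₁))⁻¹ ≤ P * ((l:ℝ)^β₁)⁻¹ :=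
          mul_le_mul_of_nonneg_left h4 hP0.le
        have h6 : P ^ ((1:ℝ) - μ*β₁) = P * (P ^ (μ*β₁))⁻¹ := by
          rw [show (1:ℝ) - μ*β₁ = 1 + (-(μ*β₁)) by ring, Real.rpow_add hP0,
            Real.rpow_one, Real.rpow_neg hP0.le]
        have h7 : X l = P * ((l:ℝ)^β₁)⁻¹ := by
          simp only [hX_def]
          rw [Real.rpow_neg hl0.le]
        rw [h6, h7]
        exact h5
      have hexp : μ ≤ ((1:ℝ) - μ*β₁) * ((1/β₂)*ν) := by
        have hexpand : ((1:ℝ) - μ*β₁) * ((1/β₂)*ν) = ν/β₂ - μ*β₁*(ν/β₂) := by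
          ring
        rw [hexpand]
        have hh : μ * (1 + ν * β₁ / β₂) = μ + μ*β₁*(ν/β₂) := by ring
        rw [hh] at hμ1
        linarith
      have hM2ν : M2 l ^ ν = (X l) ^ ((1/β₂)*ν) := by
        simp only [hM2_def]
        rw [← Real.rpow_mul hX0.le]
      calc (l:ℝ) ≤ P ^ μ := hlP
        _ ≤ P ^ (((1:ℝ) - μ*β₁) * ((1/β₂)*ν)) :=
            Real.rpow_le_rpow_of_exponent_le hP1 hexp
        _ = (P ^ ((1:ℝ) - μ*β₁)) ^ ((1/β₂)*ν) := Real.rpow_mul hP0.le _ _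
        _ ≤ (X l) ^ ((1/β₂)*ν) := Real.rpow_le_rpow (by positivity) hXb (by positivity)
        _ = M2 l ^ ν := hM2ν.symm
    have hbnd := hII2 (M2 l) l hM2ge1 hl1 hlM2ν
    rw [hM2b] at hbnd
    have hRHS : K2 * (l:ℝ)^D * (M2 l)^(β₂-δ) ≤ (K2 * P^((1:ℝ)-q)) * (l:ℝ)^estar := by
      have hq_eq : (1/β₂)*(β₂-δ) = (1:ℝ) - q := by
        rw [hq_def]
        field_simp
      have e1 : (M2 l)^(β₂-δ) = (X l) ^ ((1:ℝ)-q) := by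
        simp only [hM2_def]
        rw [← Real.rpow_mul hX0.le, hq_eq]
      have e2 : (X l) ^ ((1:ℝ)-q) = P^((1:ℝ)-q) * ((l:ℝ)^(-β₁))^((1:ℝ)-q) := by
        simp only [hX_def]
        exact Real.mul_rpow hP0.le (Real.rpow_nonneg hl0.le _)
      have e3 : ((l:ℝ)^(-β₁))^((1:ℝ)-q) = (l:ℝ)^((-β₁)*((1:ℝ)-q)) :=
        (Real.rpow_mul hl0.le _ _).symm
      have e4 : (l:ℝ)^D * (l:ℝ)^((-β₁)*((1:ℝ)-q)) = (l:ℝ)^(D + (-β₁)*((1:ℝ)-q)) :=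
        (Real.rpow_add hl0 _ _).symm
      have e5 : (l:ℝ)^(D + (-β₁)*((1:ℝ)-q)) ≤ (l:ℝ)^estar := by
        apply Real.rpow_le_rpow_of_exponent_le hl1'
        have : D + (-β₁)*((1:ℝ)-q) = ee := by
          rw [hee_def, hq_def]
          field_simp
          ring
        rw [this, hestar_def]
        exact le_max_left _ _
      calc K2 * (l:ℝ)^D * (M2 l)^(β₂-δ)
          = (K2 * P^((1:ℝ)-q)) * ((l:ℝ)^D * (l:ℝ)^((-β₁)*((1:ℝ)-q))) := by
            rw [e1, e2, e3]; ring
        _ = (K2 * P^((1:ℝ)-q)) * (l:ℝ)^(D + (-β₁)*((1:ℝ)-q)) := by rw [e4]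
        _ ≤ (K2 * P^((1:ℝ)-q)) * (l:ℝ)^estar := by
            apply mul_le_mul_of_nonneg_left e5 (by positivity)
    exact le_trans hbnd hRHS
  -- Step D summed
  have hD_total : |(∑ l ∈ Icc 1 NP, ∑ m ∈ Icc 1 ⌊M2 l⌋₊, h l m) -
      (∑ l ∈ Icc 1 NP, c₂ l * X l)| ≤
      (K2*(1+2/(estar+1))) * P ^ ((1:ℝ) - ϑ) := by
    have h1 : |(∑ l ∈ Icc 1 NP, ∑ m ∈ Icc 1 ⌊M2 l⌋₊, h l m) -
        (∑ l ∈ Icc 1 NP, c₂ l * X l)| ≤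
        ∑ l ∈ Icc 1 NP, (K2 * P^((1:ℝ)-q)) * (l:ℝ)^estar := by
      rw [← Finset.sum_sub_distrib]
      exact le_trans (Finset.abs_sum_le_sum_abs _ _) (Finset.sum_le_sum hstepD)
    have h2 : ∑ l ∈ Icc 1 NP, (K2 * P^((1:ℝ)-q)) * (l:ℝ)^estar =
        (K2 * P^((1:ℝ)-q)) * ∑ l ∈ Icc 1 NP, (l:ℝ)^estar := by
      rw [Finset.mul_sum]
    have h3 : ∑ l ∈ Icc 1 NP, (l:ℝ)^estar ≤ (1+2/(estar+1)) * (NP:ℝ)^(estar+1) :=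
      sum_Icc_pow_le estar hestar NP
    have h4 : (NP:ℝ)^(estar+1) ≤ P ^ (μ*(estar+1)) := by
      calc (NP:ℝ)^(estar+1) ≤ (P^μ)^(estar+1) :=
          Real.rpow_le_rpow (Nat.cast_nonneg NP) hNPle hestar1.le
        _ = P ^ (μ*(estar+1)) := by rw [← Real.rpow_mul hP0.le]
    have h5 : P^((1:ℝ)-q) * P^(μ*(estar+1)) ≤ P^((1:ℝ)-ϑ) := by
      rw [← Real.rpow_add hP0]
      apply Real.rpow_le_rpow_of_exponent_le hP1
      linarith
    have hposc : (0:ℝ) < 1+2/(estar+1) := by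
      have : (0:ℝ) < 2/(estar+1) := div_pos two_pos hestar1
      linarith
    calc |(∑ l ∈ Icc 1 NP, ∑ m ∈ Icc 1 ⌊M2 l⌋₊, h l m) - (∑ l ∈ Icc 1 NP, c₂ l * X l)|
        ≤ (K2 * P^((1:ℝ)-q)) * ∑ l ∈ Icc 1 NP, (l:ℝ)^estar := by rw [← h2]; exact h1
      _ ≤ (K2 * P^((1:ℝ)-q)) * ((1+2/(estar+1)) * (NP:ℝ)^(estar+1)) := by
          apply mul_le_mul_of_nonneg_left h3 (by positivity)
      _ ≤ (K2 * P^((1:ℝ)-q)) * ((1+2/(estar+1)) * P^(μ*(estar+1))) := by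
          apply mul_le_mul_of_nonneg_left (mul_le_mul_of_nonneg_left h4 hposc.le)
            (by positivity)
      _ = (K2*(1+2/(estar+1))) * (P^((1:ℝ)-q) * P^(μ*(estar+1))) := by ring
      _ ≤ (K2*(1+2/(estar+1))) * P^((1:ℝ)-ϑ) := by
          apply mul_le_mul_of_nonneg_left h5 (mul_nonneg hK2pos.le hposc.le)
  -- Step C : the lower cutoff double sum
  have hC_total : |∑ l ∈ Icc 1 NP, ∑ m ∈ Icc 1 ⌊M1⌋₊, h l m| ≤
      (|C| + K1) * P ^ ((1:ℝ) - ϑ) := by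
    have hb := hI1 (P^μ) M1 hPμ1 hM1ge1
    rw [hM1b] at hb
    have hNPfl : ⌊P ^ μ⌋₊ = NP := hNP_def.symm
    rw [hNPfl] at hb
    have hmin1 : (1:ℝ) ≤ min (P^μ) M1 := le_min hPμ1 hM1ge1
    have hminle : (min (P^μ) M1) ^ (-δ) ≤ 1 :=
      Real.rpow_le_one_of_one_le_of_nonpos hmin1 (by linarith)
    have hPP : (P^μ)^β₁ * P^((1:ℝ)/2) = P ^ (μ*β₁ + 1/2) := by
      rw [← Real.rpow_mul hP0.le, ← Real.rpow_add hP0]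
    have hexp : P ^ (μ*β₁ + 1/2) ≤ P ^ ((1:ℝ)-ϑ) := by
      apply Real.rpow_le_rpow_of_exponent_le hP1
      linarith
    have hK1t : K1 * (P^μ)^β₁ * P^((1:ℝ)/2) * (min (P^μ) M1) ^ (-δ) ≤
        K1 * P ^ (μ*β₁ + 1/2) := by
      calc K1 * (P^μ)^β₁ * P^((1:ℝ)/2) * (min (P^μ) M1) ^ (-δ)
          ≤ K1 * (P^μ)^β₁ * P^((1:ℝ)/2) * 1 := by
            apply mul_le_mul_of_nonneg_left hminle (by positivity)
        _ = K1 * ((P^μ)^β₁ * P^((1:ℝ)/2)) := by ring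
        _ = K1 * P ^ (μ*β₁ + 1/2) := by rw [hPP]
    have hCt : |C * (P^μ)^β₁ * P^((1:ℝ)/2)| ≤ |C| * P ^ (μ*β₁ + 1/2) := by
      rw [abs_mul, abs_mul, abs_of_pos (Real.rpow_pos_of_pos hPμ0 β₁),
        abs_of_pos (Real.rpow_pos_of_pos hP0 _), mul_assoc, hPP]
    calc |∑ l ∈ Icc 1 NP, ∑ m ∈ Icc 1 ⌊M1⌋₊, h l m|
        ≤ |(∑ l ∈ Icc 1 NP, ∑ m ∈ Icc 1 ⌊M1⌋₊, h l m) - C * (P^μ)^β₁ * P^((1:ℝ)/2)| +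
          |C * (P^μ)^β₁ * P^((1:ℝ)/2)| := by
          have := abs_sub_abs_le_abs_sub (∑ l ∈ Icc 1 NP, ∑ m ∈ Icc 1 ⌊M1⌋₊, h l m)
            (C * (P^μ)^β₁ * P^((1:ℝ)/2))
          have h9 := abs_add_le ((∑ l ∈ Icc 1 NP, ∑ m ∈ Icc 1 ⌊M1⌋₊, h l m) -
            C * (P^μ)^β₁ * P^((1:ℝ)/2)) (C * (P^μ)^β₁ * P^((1:ℝ)/2))
          simpa using h9
      _ ≤ K1 * P ^ (μ*β₁ + 1/2) + |C| * P ^ (μ*β₁ + 1/2) :=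
          add_le_add (le_trans hb hK1t) hCt
      _ = (|C| + K1) * P ^ (μ*β₁ + 1/2) := by ring
      _ ≤ (|C| + K1) * P ^ ((1:ℝ)-ϑ) := by
          apply mul_le_mul_of_nonneg_left hexp (by positivity)
  -- Step F : main term handling
  have hGNP := hG NP hNP1
  have hF1 : P * |(∑ l ∈ Icc 1 NP, c₂ l * (l:ℝ)^(-β₁)) - β₁*C*Real.log NP - B| ≤
      2*K5 * P ^ ((1:ℝ) - ϑ) := by
    have hNPd : (NP:ℝ)^(-(d:ℝ)) ≤ 2 * P ^ (-(μ*d)) := by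
      have h1 : (NP:ℝ)^(-(d:ℝ)) ≤ (P^μ/2)^(-(d:ℝ)) :=
        Real.rpow_le_rpow_of_nonpos (by linarith) hNPhalf (by linarith)
      have h2 : (P^μ/2)^(-(d:ℝ)) = (P^μ)^(-(d:ℝ)) * (2:ℝ)^(d:ℝ) := by
        rw [Real.div_rpow (by positivity) (by norm_num), Real.rpow_neg (by norm_num : (0:ℝ) ≤ 2)]
        field_simp
      have h3 : (2:ℝ)^(d:ℝ) ≤ 2 := by
        calc (2:ℝ)^(d:ℝ) ≤ (2:ℝ)^(1:ℝ) :=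
            Real.rpow_le_rpow_of_exponent_le (by norm_num) hd1
          _ = 2 := Real.rpow_one 2
      have h4 : (P^μ)^(-(d:ℝ)) = P ^ (-(μ*d)) := by
        rw [← Real.rpow_mul hP0.le]
        congr 1; ring
      calc (NP:ℝ)^(-(d:ℝ)) ≤ (P^μ)^(-(d:ℝ)) * (2:ℝ)^(d:ℝ) := by rw [← h2]; exact h1
        _ ≤ (P^μ)^(-(d:ℝ)) * 2 := by
            apply mul_le_mul_of_nonneg_left h3 (by positivity)
        _ = 2 * P ^ (-(μ*d)) := by rw [h4]; ring
    have h5 : P * ((NP:ℝ)^(-(d:ℝ))) ≤ 2 * P ^ ((1:ℝ) - μ*d) := by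
      calc P * ((NP:ℝ)^(-(d:ℝ))) ≤ P * (2 * P ^ (-(μ*d))) :=
          mul_le_mul_of_nonneg_left hNPd hP0.le
        _ = 2 * (P * P ^ (-(μ*d))) := by ring
        _ = 2 * P ^ ((1:ℝ) - μ*d) := by
            rw [show (1:ℝ) - μ*d = 1 + (-(μ*d)) by ring, Real.rpow_add hP0, Real.rpow_one]
    have h6 : P ^ ((1:ℝ) - μ*d) ≤ P ^ ((1:ℝ) - ϑ) :=
      Real.rpow_le_rpow_of_exponent_le hP1 (by linarith)
    calc P * |(∑ l ∈ Icc 1 NP, c₂ l * (l:ℝ)^(-β₁)) - β₁*C*Real.log NP - B|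
        ≤ P * (K5 * (NP:ℝ)^(-(d:ℝ))) := by
          apply mul_le_mul_of_nonneg_left _ hP0.le
          exact hGNP
      _ = K5 * (P * (NP:ℝ)^(-(d:ℝ))) := by ring
      _ ≤ K5 * (2 * P ^ ((1:ℝ) - μ*d)) := mul_le_mul_of_nonneg_left h5 hK5pos.le
      _ = 2*K5 * P ^ ((1:ℝ) - μ*d) := by ring
      _ ≤ 2*K5 * P ^ ((1:ℝ) - ϑ) := by
          apply mul_le_mul_of_nonneg_left h6 (by positivity)
  have hF2 : |β₁*C*P| * |Real.log NP - μ * Real.log P| ≤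
      2*(|β₁*C|) * P ^ ((1:ℝ) - ϑ) := by
    have hlog1 : Real.log NP ≤ μ * Real.log P := by
      rw [← Real.log_rpow hP0]
      exact Real.log_le_log hNPpos hNPle
    have hlog2 : μ * Real.log P - Real.log NP ≤ 2 * P ^ (-μ) := by
      have e1 : μ * Real.log P - Real.log NP = Real.log (P^μ / NP) := by
        rw [Real.log_div (by positivity) (by positivity), Real.log_rpow hP0]
      have e2 : Real.log (P^μ / NP) ≤ P^μ / NP - 1 :=
        Real.log_le_sub_one_of_pos (by positivity)
      have e3 : P^μ / NP - 1 = (P^μ - NP) / NP := by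
        field_simp
      have e4 : (P^μ - NP) / NP ≤ 1 / NP :=
        div_le_div_of_nonneg_right (by linarith) hNPpos.le
      have e5 : (1:ℝ) / NP ≤ 2 * P ^ (-μ) := by
        rw [Real.rpow_neg hP0.le]
        rw [div_le_iff₀ hNPpos]
        have : P ^ μ * (P^μ)⁻¹ = 1 := by
          field_simp
        calc (1:ℝ) = P^μ * (P^μ)⁻¹ := this.symm
          _ ≤ 2 * (NP:ℝ) * (P^μ)⁻¹ := by
              apply mul_le_mul_of_nonneg_right _ (by positivity)
              linarith
          _ = 2 * (P^μ)⁻¹ * NP := by ring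
      rw [e1]
      calc Real.log (P^μ / NP) ≤ P^μ / NP - 1 := e2
        _ = (P^μ - NP) / NP := e3
        _ ≤ 1 / NP := e4
        _ ≤ 2 * P ^ (-μ) := e5
    have habs : |Real.log NP - μ * Real.log P| ≤ 2 * P ^ (-μ) := by
      rw [abs_sub_comm, abs_of_nonneg (by linarith)]
      exact hlog2
    have hPabs : |β₁*C*P| = |β₁*C| * P := by
      rw [abs_mul, abs_of_pos hP0]
    rw [hPabs]
    calc |β₁*C| * P * |Real.log NP - μ * Real.log P|
        ≤ |β₁*C| * P * (2 * P ^ (-μ)) := by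
          apply mul_le_mul_of_nonneg_left habs (by positivity)
      _ = 2*(|β₁*C|) * (P * P ^ (-μ)) := by ring
      _ = 2*(|β₁*C|) * P ^ ((1:ℝ) - μ) := by
          rw [show (1:ℝ) - μ = 1 + (-μ) by ring, Real.rpow_add hP0, Real.rpow_one]
      _ ≤ 2*(|β₁*C|) * P ^ ((1:ℝ) - ϑ) := by
          apply mul_le_mul_of_nonneg_left
            (Real.rpow_le_rpow_of_exponent_le hP1 (by linarith)) (by positivity)
  -- Assemble
  have hT1 : T1 h β₁ β₂ μ P =
      (∑ l ∈ Icc 1 NP, ∑ m ∈ Icc 1 ⌊M2 l⌋₊, h l m) -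
      (∑ l ∈ Icc 1 NP, ∑ m ∈ Icc 1 ⌊M1⌋₊, h l m) := by
    unfold T1
    rw [← hNP_def, ← Finset.sum_sub_distrib]
    exact Finset.sum_congr rfl hstepA
  have hXsum : (∑ l ∈ Icc 1 NP, c₂ l * X l) =
      P * ∑ l ∈ Icc 1 NP, c₂ l * (l:ℝ)^(-β₁) := by
    rw [Finset.mul_sum]
    apply Finset.sum_congr rfl
    intro l _
    simp only [hX_def]
    ring
  have hdecomp : T1 h β₁ β₂ μ P - (β₁ * C * μ * P * Real.log P + B * P) =
      ((∑ l ∈ Icc 1 NP, ∑ m ∈ Icc 1 ⌊M2 l⌋₊, h l m) - (∑ l ∈ Icc 1 NP, c₂ l * X l))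
      + P * ((∑ l ∈ Icc 1 NP, c₂ l * (l:ℝ)^(-β₁)) - β₁*C*Real.log NP - B)
      + (β₁*C*P) * (Real.log NP - μ * Real.log P)
      - (∑ l ∈ Icc 1 NP, ∑ m ∈ Icc 1 ⌊M1⌋₊, h l m) := by
    rw [hT1, hXsum]
    ring
  rw [Real.norm_eq_abs, Real.norm_eq_abs, hdecomp,
    abs_of_pos (Real.rpow_pos_of_pos hP0 ((1:ℝ)-ϑ))]
  have habs4 : |((∑ l ∈ Icc 1 NP, ∑ m ∈ Icc 1 ⌊M2 l⌋₊, h l m) - (∑ l ∈ Icc 1 NP, c₂ l * X l))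
      + P * ((∑ l ∈ Icc 1 NP, c₂ l * (l:ℝ)^(-β₁)) - β₁*C*Real.log NP - B)
      + (β₁*C*P) * (Real.log NP - μ * Real.log P)
      - (∑ l ∈ Icc 1 NP, ∑ m ∈ Icc 1 ⌊M1⌋₊, h l m)| ≤
      |(∑ l ∈ Icc 1 NP, ∑ m ∈ Icc 1 ⌊M2 l⌋₊, h l m) - (∑ l ∈ Icc 1 NP, c₂ l * X l)|
      + P * |(∑ l ∈ Icc 1 NP, c₂ l * (l:ℝ)^(-β₁)) - β₁*C*Real.log NP - B|
      + |β₁*C*P| * |Real.log NP - μ * Real.log P|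
      + |∑ l ∈ Icc 1 NP, ∑ m ∈ Icc 1 ⌊M1⌋₊, h l m| := by
    have t1 := abs_add_le ((∑ l ∈ Icc 1 NP, ∑ m ∈ Icc 1 ⌊M2 l⌋₊, h l m) -
      (∑ l ∈ Icc 1 NP, c₂ l * X l))
      (P * ((∑ l ∈ Icc 1 NP, c₂ l * (l:ℝ)^(-β₁)) - β₁*C*Real.log NP - B))
    have t2 := abs_add_le (((∑ l ∈ Icc 1 NP, ∑ m ∈ Icc 1 ⌊M2 l⌋₊, h l m) -
      (∑ l ∈ Icc 1 NP, c₂ l * X l)) +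
      P * ((∑ l ∈ Icc 1 NP, c₂ l * (l:ℝ)^(-β₁)) - β₁*C*Real.log NP - B))
      ((β₁*C*P) * (Real.log NP - μ * Real.log P))
    have t3 := abs_sub (((∑ l ∈ Icc 1 NP, ∑ m ∈ Icc 1 ⌊M2 l⌋₊, h l m) -
      (∑ l ∈ Icc 1 NP, c₂ l * X l)) +
      P * ((∑ l ∈ Icc 1 NP, c₂ l * (l:ℝ)^(-β₁)) - β₁*C*Real.log NP - B) +
      (β₁*C*P) * (Real.log NP - μ * Real.log P))
      (∑ l ∈ Icc 1 NP, ∑ m ∈ Icc 1 ⌊M1⌋₊, h l m)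
    have t4 : |P * ((∑ l ∈ Icc 1 NP, c₂ l * (l:ℝ)^(-β₁)) - β₁*C*Real.log NP - B)| =
        P * |(∑ l ∈ Icc 1 NP, c₂ l * (l:ℝ)^(-β₁)) - β₁*C*Real.log NP - B| := by
      rw [abs_mul, abs_of_pos hP0]
    have t5 : |(β₁*C*P) * (Real.log NP - μ * Real.log P)| =
        |β₁*C*P| * |Real.log NP - μ * Real.log P| := abs_mul _ _
    linarith [t1, t2, t3, t4, t5]
  refine le_trans habs4 (le_trans
    (add_le_add (add_le_add (add_le_add hD_total hF1) hF2) hC_total) (le_of_eq (by ring)))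


end T1helpers

end BiprojCM
end
end
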